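/- arXiv:2001.06508 — 10 statements merged into one kernel-verified Lean document; each statement's English description precedes it below -/
import Mathlib

section
/- Let G be a compact Hausdorff topological group with normalized Haar measure m, and let A ⊆ G be measurable with m(A) > 0. Then for every positive integer k there exists an open neighborhood U of the identity in G such that m(A ∩ u₁A ∩ ⋯ ∩ uₖA) > 0 for all u₁, …, uₖ ∈ U. -/
open MeasureTheory Pointwise ENNReal

theorem stmt_2 {G : Type*} [Group G] [TopologicalSpace G] [IsTopologicalGroup G]
    [CompactSpace G] [T2Space G] [MeasurableSpace G] [BorelSpace G]
    (μ : Measure G) [μ.IsHaarMeasure] [IsProbabilityMeasure μ]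
    (A : Set G) (hmeas : MeasurableSet A) (hpos : 0 < μ A)
    (k : ℕ) (hk : 0 < k) :
    ∃ U : Set G, IsOpen U ∧ (1 : G) ∈ U ∧
      ∀ u : Fin k → G, (∀ i, u i ∈ U) → 0 < μ (A ∩ ⋂ i, u i • A) := by
  -- choose a compact K ⊆ A of positive measure
  obtain ⟨K, hKA, hKc, hKμ⟩ : ∃ K ⊆ A, IsCompact K ∧ μ A < μ K + μ A :=
    hmeas.exists_isCompact_lt_add (measure_ne_top μ A) hpos.ne'
  have hKpos : 0 < μ K := by
    by_contra h
    push_neg at h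
    simp only [le_zero_iff] at h
    rw [h, zero_add] at hKμ
    exact lt_irrefl _ hKμ
  have hKcl : IsClosed K := hKc.isClosed
  set ε : ℝ≥0∞ := μ K / (k + 1) with hε
  have hεne : ε ≠ 0 := by
    apply ENNReal.div_ne_zero.2
    exact ⟨hKpos.ne', by simp⟩
  have hk1 : ((k : ℝ≥0∞) + 1) ≠ 0 := by
    simp
  have hcancel : ε * (k + 1) = μ K :=
    ENNReal.div_mul_cancel hk1 (by simp)
  have hkε : (k : ℝ≥0∞) * ε < μ K := by
    rw [← hcancel, mul_comm ε]
    have hεlt : ε < ⊤ := ENNReal.div_lt_top (measure_ne_top μ K) hk1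
    exact ENNReal.mul_lt_mul_left hεne hεlt.ne (by
      exact_mod_cast Nat.lt_succ_self k)
  -- open neighborhood V of 1 with small translate differences
  obtain ⟨V, hVnhds, hV⟩ := (eventually_nhds_one_measure_smul_diff_lt
    (μ := μ) hKc hKcl hεne).exists_mem
  obtain ⟨W, hWV, hWopen, hW1⟩ := mem_nhds_iff.1 hVnhds
  refine ⟨W⁻¹, hWopen.inv, by simpa using hW1, fun u hu => ?_⟩
  -- for u ∈ W⁻¹, μ (K \ u • K) < ε
  have key : ∀ i, μ (K \ u i • K) < ε := by
    intro i
    have h1 : (u i)⁻¹ ∈ W := by simpa using hu i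
    have := hV _ (hWV h1)
    have heq : μ (K \ u i • K) = μ ((u i)⁻¹ • K \ K) := by
      rw [← MeasureTheory.measure_smul (μ := μ) ((u i)⁻¹) (K \ u i • K)]
      congr 1
      rw [Set.smul_set_sdiff, smul_smul, inv_mul_cancel, one_smul]
    rwa [heq]
  set S : Set G := ⋂ i, u i • K with hS
  have hdiff : μ (K \ S) < μ K := by
    have h1 : K \ S ⊆ ⋃ i, K \ u i • K := by
      intro x hx
      rw [hS, Set.mem_diff, Set.mem_iInter] at hx
      push_neg at hx
      obtain ⟨hxK, i, hi⟩ := hx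
      exact Set.mem_iUnion.2 ⟨i, hxK, hi⟩
    calc μ (K \ S) ≤ ∑' i : Fin k, μ (K \ u i • K) :=
          (measure_mono h1).trans (measure_iUnion_le _)
      _ ≤ ∑' _ : Fin k, ε := ENNReal.tsum_le_tsum fun i => (key i).le
      _ = (k : ℝ≥0∞) * ε := by
          rw [tsum_fintype]
          simp [Finset.sum_const, nsmul_eq_mul]
      _ < μ K := hkε
  have hKS : 0 < μ (K ∩ S) := by
    by_contra h
    push_neg at h
    simp only [le_zero_iff] at h
    have := measure_le_inter_add_diff μ K S
    rw [h, zero_add] at this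
    exact absurd (this.trans_lt hdiff) (lt_irrefl _)
  refine hKS.trans_le (measure_mono ?_)
  apply Set.inter_subset_inter hKA
  exact Set.iInter_mono fun i => Set.smul_set_mono hKA
end

section
/- Let G be a group and α an automorphism of G. Suppose a, b, x ∈ G satisfy α(x) = x⁻¹, α(bx) = (bx)⁻¹, α(ax) = (ax)⁻¹, and α(abx) = (abx)⁻¹. Then a and b commute: [a,b] = 1. -/
open scoped commutatorElement in
theorem stmt_4 {G : Type*} [Group G] (α : G ≃* G) (a b x : G)
    (hx : α x = x⁻¹) (hbx : α (b * x) = (b * x)⁻¹)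
    (hax : α (a * x) = (a * x)⁻¹) (habx : α (a * b * x) = (a * b * x)⁻¹) :
    ⁅a, b⁆ = 1 := by
  rw [map_mul, hx, mul_inv_rev] at hax hbx
  have ha : α a = x⁻¹ * a⁻¹ * x := by rw [← hax]; group
  have hb : α b = x⁻¹ * b⁻¹ * x := by rw [← hbx]; group
  rw [map_mul, map_mul, hx, ha, hb, mul_inv_rev, mul_inv_rev] at habx
  have key : a⁻¹ * b⁻¹ = b⁻¹ * a⁻¹ := by
    have h := congrArg (fun y => x * y) habx
    group at h
    simpa using h
  have : b * a = a * b := by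
    have := congrArg (fun y => y⁻¹) key
    simpa [mul_inv_rev] using this
  rw [commutatorElement_def, ← this]; group
end

section
/- Let G be a compact Hausdorff topological group and α a (not necessarily continuous) automorphism of G such that the set X = {x ∈ G : α(x) = x⁻¹} is Haar-measurable with positive Haar measure. Then G contains an open normal abelian subgroup. -/
open MeasureTheory

theorem stmt_5 {G : Type*} [Group G] [TopologicalSpace G] [IsTopologicalGroup G]
    [CompactSpace G] [T2Space G] [MeasurableSpace G] [BorelSpace G]
    (μ : Measure G) [μ.IsHaarMeasure] [IsProbabilityMeasure μ]
    (α : G ≃* G)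
    (hmeas : MeasurableSet {x : G | α x = x⁻¹})
    (hpos : 0 < μ {x : G | α x = x⁻¹}) :
    ∃ H : Subgroup G, IsOpen (H : Set G) ∧ H.Normal ∧
      ∀ a ∈ H, ∀ b ∈ H, a * b = b * a := by
  classical
  set X : Set G := {x : G | α x = x⁻¹} with hXdef
  have hXmem : ∀ x ∈ X, α x = x⁻¹ := fun x hx => hx
  haveI : Nonempty G := ⟨1⟩
  -- μ is regular, being the unique Haar probability measure
  let K₀ : TopologicalSpace.PositiveCompacts G :=
    ⟨⟨Set.univ, isCompact_univ⟩, by simp⟩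
  haveI : IsProbabilityMeasure (Measure.haarMeasure K₀) :=
    ⟨by exact Measure.haarMeasure_self (K₀ := K₀)⟩
  have hμeq : μ = Measure.haarMeasure K₀ :=
    Measure.isHaarMeasure_eq_of_isProbabilityMeasure μ _
  haveI : μ.Regular := by rw [hμeq]; exact Measure.regular_haarMeasure
  -- approximate X by a compact subset and an open superset
  have hc0 : μ X ≠ 0 := hpos.ne'
  have hcT : μ X ≠ ⊤ := measure_ne_top μ X
  have hε : μ X / 8 ≠ 0 := by
    simp [ENNReal.div_eq_zero_iff, hc0]
  obtain ⟨K, hKX, hKcomp, hK⟩ := hmeas.exists_isCompact_lt_add hcT hε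
  obtain ⟨O, hXO, hOopen, hO⟩ := Set.exists_isOpen_lt_add X hcT hε
  have hKO : K ⊆ O := hKX.trans hXO
  obtain ⟨V₀, hV₀, hV₀KO⟩ := compact_open_separated_mul_left hKcomp hOopen hKO
  obtain ⟨V₁, hV₁open, hV₁mem, hV₁⟩ := exists_open_nhds_one_mul_subset hV₀
  have hV₁sub : V₁ ⊆ V₀ := fun v hv => by
    have : v * 1 ∈ V₀ := hV₁ (Set.mul_mem_mul hv hV₁mem)
    simpa using this
  set W : Set G := V₁ ∩ V₁⁻¹ with hWdef
  have hWopen : IsOpen W := hV₁open.inter hV₁open.inv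
  have hW1 : (1 : G) ∈ W := ⟨hV₁mem, by simpa using hV₁mem⟩
  have hWV₁ : W ⊆ V₁ := Set.inter_subset_left
  have hWinvV₁ : ∀ g ∈ W, g⁻¹ ∈ V₁ := fun g hg => hg.2
  have hKmeas : MeasurableSet K := hKcomp.isClosed.measurableSet
  -- key commutation claim
  have key : ∀ g ∈ W, ∀ g' ∈ W, g * g' = g' * g := by
    intro g hg g' hg'
    -- all relevant translates of K lie in O
    have htrans : ∀ h : G, h⁻¹ ∈ V₀ → ((h * ·) ⁻¹' K) ⊆ O := by
      intro h hh y hy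
      have h1 : h * y ∈ K := hy
      have h2 : h⁻¹ * (h * y) ∈ O := hV₀KO (Set.mul_mem_mul hh h1)
      simpa [← mul_assoc] using h2
    have hgV : g⁻¹ ∈ V₀ := hV₁sub (hWinvV₁ g hg)
    have hg'V : g'⁻¹ ∈ V₀ := hV₁sub (hWinvV₁ g' hg')
    have hgg'V : (g * g')⁻¹ ∈ V₀ := by
      rw [mul_inv_rev]
      exact hV₁ (Set.mul_mem_mul (hWinvV₁ g' hg') (hWinvV₁ g hg))
    set S₂ : Set G := (g * ·) ⁻¹' K with hS₂
    set S₃ : Set G := (g' * ·) ⁻¹' K with hS₃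
    set S₄ : Set G := ((g * g') * ·) ⁻¹' K with hS₄
    have hS₂O : S₂ ⊆ O := htrans g hgV
    have hS₃O : S₃ ⊆ O := htrans g' hg'V
    have hS₄O : S₄ ⊆ O := htrans (g * g') hgg'V
    have hS₂m : MeasurableSet S₂ := hKmeas.preimage (measurable_const_mul g)
    have hS₃m : MeasurableSet S₃ := hKmeas.preimage (measurable_const_mul g')
    have hS₄m : MeasurableSet S₄ := hKmeas.preimage (measurable_const_mul (g * g'))
    have hμS₂ : μ S₂ = μ K := measure_preimage_mul μ g K
    have hμS₃ : μ S₃ = μ K := measure_preimage_mul μ g' K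
    have hμS₄ : μ S₄ = μ K := measure_preimage_mul μ (g * g') K
    -- the intersection is nonempty
    have inter_ineq : ∀ (s t : Set G), MeasurableSet t → s ⊆ O → t ⊆ O →
        μ s + μ t ≤ μ O + μ (s ∩ t) := by
      intro s t htm hsO htO
      have h1 : μ (s ∪ t) + μ (s ∩ t) = μ s + μ t := measure_union_add_inter s htm
      have h2 : μ (s ∪ t) ≤ μ O := measure_mono (Set.union_subset hsO htO)
      calc μ s + μ t = μ (s ∪ t) + μ (s ∩ t) := h1.symm
        _ ≤ μ O + μ (s ∩ t) := add_le_add_left h2 _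
    have h12 : μ K + μ K ≤ μ O + μ (K ∩ S₂) := by
      simpa [hμS₂] using inter_ineq K S₂ hS₂m hKO hS₂O
    have h123 : μ (K ∩ S₂) + μ K ≤ μ O + μ ((K ∩ S₂) ∩ S₃) := by
      simpa [hμS₃] using
        inter_ineq (K ∩ S₂) S₃ hS₃m (Set.inter_subset_left.trans hKO) hS₃O
    have h1234 : μ ((K ∩ S₂) ∩ S₃) + μ K ≤ μ O + μ (((K ∩ S₂) ∩ S₃) ∩ S₄) := by
      simpa [hμS₄] using inter_ineq ((K ∩ S₂) ∩ S₃) S₄ hS₄m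
        ((Set.inter_subset_left.trans Set.inter_subset_left).trans hKO) hS₄O
    set A : Set G := ((K ∩ S₂) ∩ S₃) ∩ S₄ with hA
    have hAne : A.Nonempty := by
      by_contra hemp
      rw [Set.not_nonempty_iff_eq_empty] at hemp
      have hμA : μ A = 0 := by rw [hemp]; exact measure_empty
      -- pass to real numbers
      have fin : ∀ s : Set G, μ s ≠ ⊤ := fun s => measure_ne_top μ s
      set k : ℝ := (μ K).toReal
      set o : ℝ := (μ O).toReal
      set x : ℝ := (μ X).toReal
      have hx0 : 0 < x := ENNReal.toReal_pos hc0 hcT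
      have hxk : x < k + x / 8 := by
        have := ENNReal.toReal_strict_mono (by
          exact ENNReal.add_ne_top.2 ⟨fin K, (ENNReal.div_lt_top hcT (by norm_num)).ne⟩) hK
        rw [ENNReal.toReal_add (fin K) ((ENNReal.div_lt_top hcT (by norm_num)).ne)] at this
        simpa [ENNReal.toReal_div] using this
      have hox : o < x + x / 8 := by
        have := ENNReal.toReal_strict_mono (by
          exact ENNReal.add_ne_top.2 ⟨hcT, (ENNReal.div_lt_top hcT (by norm_num)).ne⟩) hO
        rw [ENNReal.toReal_add hcT ((ENNReal.div_lt_top hcT (by norm_num)).ne)] at this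
        simpa [ENNReal.toReal_div] using this
      have r12 : k + k ≤ o + (μ (K ∩ S₂)).toReal := by
        have := ENNReal.toReal_mono (ENNReal.add_ne_top.2 ⟨fin O, fin _⟩) h12
        rwa [ENNReal.toReal_add (fin K) (fin K), ENNReal.toReal_add (fin O) (fin _)] at this
      have r123 : (μ (K ∩ S₂)).toReal + k ≤ o + (μ ((K ∩ S₂) ∩ S₃)).toReal := by
        have := ENNReal.toReal_mono (ENNReal.add_ne_top.2 ⟨fin O, fin _⟩) h123
        rwa [ENNReal.toReal_add (fin _) (fin K), ENNReal.toReal_add (fin O) (fin _)] at this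
      have r1234 : (μ ((K ∩ S₂) ∩ S₃)).toReal + k ≤ o + (μ A).toReal := by
        have := ENNReal.toReal_mono (ENNReal.add_ne_top.2 ⟨fin O, fin _⟩) h1234
        rwa [ENNReal.toReal_add (fin _) (fin K), ENNReal.toReal_add (fin O) (fin _)] at this
      rw [hμA] at r1234
      simp only [ENNReal.toReal_zero] at r1234
      linarith
    obtain ⟨y, hy⟩ := hAne
    have hyK : y ∈ K := hy.1.1.1
    have hyS₂ : g * y ∈ K := hy.1.1.2
    have hyS₃ : g' * y ∈ K := hy.1.2
    have hyS₄ : (g * g') * y ∈ K := hy.2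
    have e0 : α y = y⁻¹ := hXmem y (hKX hyK)
    have e2 : α g * y⁻¹ = y⁻¹ * g⁻¹ := by
      have : α (g * y) = (g * y)⁻¹ := hXmem _ (hKX hyS₂)
      rw [map_mul, e0, mul_inv_rev] at this
      exact this
    have e3 : α g' * y⁻¹ = y⁻¹ * g'⁻¹ := by
      have : α (g' * y) = (g' * y)⁻¹ := hXmem _ (hKX hyS₃)
      rw [map_mul, e0, mul_inv_rev] at this
      exact this
    have e4 : α g * (α g' * y⁻¹) = y⁻¹ * (g'⁻¹ * g⁻¹) := by
      have : α ((g * g') * y) = ((g * g') * y)⁻¹ := hXmem _ (hKX hyS₄)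
      rw [map_mul, map_mul, e0, mul_inv_rev, mul_inv_rev, mul_assoc] at this
      exact this
    -- deduce commutation
    have eg : α g = y⁻¹ * g⁻¹ * y := by
      have := congrArg (· * y) e2
      simpa [mul_assoc] using this
    have eg' : α g' = y⁻¹ * g'⁻¹ * y := by
      have := congrArg (· * y) e3
      simpa [mul_assoc] using this
    rw [eg, eg'] at e4
    have : g⁻¹ * g'⁻¹ = g'⁻¹ * g⁻¹ := by
      have h := e4
      rw [show (y⁻¹ * g⁻¹ * y) * (y⁻¹ * g'⁻¹ * y * y⁻¹) = y⁻¹ * (g⁻¹ * g'⁻¹) by group] at h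
      have h2 := mul_left_cancel h
      exact h2
    have : (g' * g)⁻¹ = (g * g')⁻¹ := by
      rw [mul_inv_rev, mul_inv_rev, this]
    exact (inv_injective this).symm
  -- build the subgroup
  set H₀ : Subgroup G := Subgroup.closure W with hH₀
  have hH₀open : IsOpen (H₀ : Set G) :=
    Subgroup.isOpen_of_mem_nhds _
      (Filter.mem_of_superset (hWopen.mem_nhds hW1) Subgroup.subset_closure)
  haveI : Finite (G ⧸ H₀) := Subgroup.quotient_finite_of_isOpen _ hH₀open
  haveI : H₀.FiniteIndex := Subgroup.finiteIndex_of_finite_quotient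
  have hH₀closed : IsClosed (H₀ : Set G) := Subgroup.isClosed_of_isOpen _ hH₀open
  have hcoreOpen : IsOpen (H₀.normalCore : Set G) :=
    Subgroup.isOpen_of_isClosed_of_finiteIndex _ (Subgroup.normalCore_isClosed _ hH₀closed)
  have habel : ∀ a ∈ H₀, ∀ b ∈ H₀, a * b = b * a := by
    intro a ha b hb
    have : Commute a b := by
      refine Subgroup.closure_induction₂ (p := fun x y _ _ => Commute x y)
        (fun x y hx hy => ?_) (fun x _ => Commute.one_left x) (fun x _ => Commute.one_right x)
        (fun x y z _ _ _ h1 h2 => h1.mul_left h2)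
        (fun y z x _ _ _ h1 h2 => h1.mul_right h2)
        (fun x y _ _ h => h.inv_left)
        (fun x y _ _ h => h.inv_right) ha hb
      exact key x hx y hy
    exact this
  exact ⟨H₀.normalCore, hcoreOpen, Subgroup.normalCore_normal H₀,
    fun a ha b hb => habel a (Subgroup.normalCore_le H₀ ha) b (Subgroup.normalCore_le H₀ hb)⟩
end

section
/- Let G be a compact Hausdorff topological group such that the set X = {x ∈ G : x² = 1} has positive Haar measure. Then G contains an open normal abelian subgroup. -/
open MeasureTheory Pointwise

/-- If `x` is an involution and `g⁻¹ * x` is an involution, then conjugation by `x`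
inverts `g`. -/
lemma aux_inv_conj {G : Type*} [Group G] {x g : G} (hx : x * x = 1)
    (hgx : (g⁻¹ * x) * (g⁻¹ * x) = 1) : x * g * x⁻¹ = g⁻¹ := by
  have hx' : x⁻¹ = x := inv_eq_of_mul_eq_one_right hx
  have ha : (g⁻¹ * x)⁻¹ = g⁻¹ * x := inv_eq_of_mul_eq_one_right hgx
  rw [mul_inv_rev, hx'] at ha
  -- ha : x * g⁻¹⁻¹ = g⁻¹ * x
  rw [inv_inv] at ha
  rw [ha, hx', mul_assoc, hx, mul_one]

theorem stmt_6 {G : Type*} [Group G] [TopologicalSpace G] [IsTopologicalGroup G]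
    [CompactSpace G] [T2Space G] [MeasurableSpace G] [BorelSpace G]
    (μ : Measure G) [μ.IsHaarMeasure] [IsProbabilityMeasure μ]
    (hpos : 0 < μ {x : G | x ^ 2 = 1}) :
    ∃ H : Subgroup G, IsOpen (H : Set G) ∧ H.Normal ∧
      ∀ a ∈ H, ∀ b ∈ H, a * b = b * a := by
  set X : Set G := {x : G | x ^ 2 = 1} with hX
  have hXc : IsClosed X := isClosed_eq (continuous_pow 2) continuous_const
  have hXm : MeasurableSet X := hXc.measurableSet
  set t : ENNReal := μ X with ht
  have htpos : 0 < t := hpos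
  have htne : t ≠ ⊤ := (measure_lt_top μ X).ne
  set ε : ENNReal := t / 8 with hε
  have hεne : ε ≠ 0 := by
    simp only [hε, ne_eq, ENNReal.div_eq_zero_iff]
    push_neg
    exact ⟨htpos.ne', by norm_num⟩
  have hεtop : ε ≠ ⊤ := by
    simp only [hε]
    exact (ENNReal.div_lt_top htne (by norm_num)).ne
  -- inner regular: compact K ⊆ X with μ X < μ K + ε
  obtain ⟨K, hKX, hKcomp, hKμ⟩ := hXm.exists_isCompact_lt_add htne hεne
  have hKm : MeasurableSet K := hKcomp.isClosed.measurableSet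
  have hKne : μ K ≠ ⊤ := (measure_lt_top μ K).ne
  -- outer regular: open U ⊇ K with μ U < μ K + ε
  obtain ⟨U, hKU, hUopen, hUμ⟩ := K.exists_isOpen_lt_add hKne hεne
  -- separation: V * K ⊆ U
  obtain ⟨V, hVnhds, hVK⟩ := compact_open_separated_mul_left hKcomp hUopen hKU
  obtain ⟨W, hWopen, hW1, hWW⟩ := exists_open_nhds_one_mul_subset hVnhds
  have hWV : W ⊆ V := fun g hg => by
    have : g * 1 ∈ V := hWW (Set.mul_mem_mul hg hW1)
    simpa using this
  -- key set
  set B : G → Set G := fun g => X ∩ (fun y => g⁻¹ * y) ⁻¹' X with hB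
  have hBm : ∀ g, MeasurableSet (B g) := fun g =>
    hXm.inter (hXm.preimage (measurable_const_mul g⁻¹))
  have hBX : ∀ g, B g ⊆ X := fun g => Set.inter_subset_left
  -- measure estimate : for g ∈ V, μ (B g) + 2*ε > t
  have hBbig : ∀ g ∈ V, t < μ (B g) + 2 * ε := by
    intro g hg
    set K' : Set G := (fun y => g⁻¹ * y) ⁻¹' K with hK'
    have hK'm : MeasurableSet K' := hKm.preimage (measurable_const_mul g⁻¹)
    have hK'μ : μ K' = μ K := measure_preimage_mul μ g⁻¹ K
    have hK'U : K' ⊆ U := by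
      intro y hy
      have : g * (g⁻¹ * y) ∈ V * K := Set.mul_mem_mul hg hy
      simpa using hVK this
    have hsub : K' ∩ K ⊆ B g := by
      intro y hy
      exact ⟨hKX hy.2, hKX hy.1⟩
    have h1 : μ K' + μ K = μ (K' ∪ K) + μ (K' ∩ K) :=
      (measure_union_add_inter K' hKm).symm
    have h2 : μ (K' ∪ K) ≤ μ U := measure_mono (Set.union_subset hK'U hKU)
    have h3 : μ (K' ∩ K) ≤ μ (B g) := measure_mono hsub
    have h4 : μ K + μ K ≤ μ U + μ (B g) := by
      calc μ K + μ K = μ K' + μ K := by rw [hK'μ]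
      _ = μ (K' ∪ K) + μ (K' ∩ K) := h1
      _ ≤ μ U + μ (B g) := add_le_add h2 h3
    -- now: t < μ K + ε, μ U < μ K + ε
    have h5 : t + μ K < μ (B g) + 2 * ε + μ K := by
      calc t + μ K < (μ K + ε) + μ K := by
            exact ENNReal.add_lt_add_right hKne hKμ
      _ = (μ K + μ K) + ε := by ring
      _ ≤ (μ U + μ (B g)) + ε := by exact add_le_add_left h4 ε
      _ < (μ K + ε + μ (B g)) + ε := by
            refine ENNReal.add_lt_add_right hεtop ?_
            exact ENNReal.add_lt_add_right (measure_lt_top μ (B g)).ne hUμ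
      _ = μ (B g) + 2 * ε + μ K := by ring
    exact lt_of_add_lt_add_right h5
  -- commuting on W
  have hIx : ∀ g x, x ∈ B g → x * g * x⁻¹ = g⁻¹ := by
    intro g x hxB
    have hx : x * x = 1 := by have := hxB.1; rwa [hX, Set.mem_setOf_eq, pow_two] at this
    have hgx : (g⁻¹ * x) * (g⁻¹ * x) = 1 := by
      have := hxB.2; rwa [Set.mem_preimage, hX, Set.mem_setOf_eq, pow_two] at this
    exact aux_inv_conj hx hgx
  have hcommW : ∀ g ∈ W, ∀ h ∈ W, g * h = h * g := by
    intro g hg h hh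
    have hgV : g ∈ V := hWV hg
    have hhV : h ∈ V := hWV hh
    have hghV : g * h ∈ V := hWW (Set.mul_mem_mul hg hh)
    -- the three sets intersect
    have hne : (B g ∩ B h ∩ B (g * h)).Nonempty := by
      by_contra hcon
      rw [Set.not_nonempty_iff_eq_empty] at hcon
      have hcover : X ⊆ (X \ B g) ∪ (X \ B h) ∪ (X \ B (g * h)) := by
        intro x hx
        by_cases h1 : x ∈ B g
        · by_cases h2 : x ∈ B h
          · have h3 : x ∉ B (g * h) := fun h3 =>
              Set.eq_empty_iff_forall_notMem.mp hcon x ⟨⟨h1, h2⟩, h3⟩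
            exact Or.inr ⟨hx, h3⟩
          · exact Or.inl (Or.inr ⟨hx, h2⟩)
        · exact Or.inl (Or.inl ⟨hx, h1⟩)
      have hdiff : ∀ g' ∈ V, μ (X \ B g') < 2 * ε := by
        intro g' hg'
        have hadd : μ (B g') + μ (X \ B g') = t := by
          rw [ht, ← measure_inter_add_diff X (hBm g'),
            Set.inter_eq_self_of_subset_right (hBX g')]
        have hlt2 : μ (B g') + μ (X \ B g') < μ (B g') + 2 * ε := by
          rw [hadd]; exact hBbig g' hg'
        exact lt_of_add_lt_add_left hlt2
      have hle : t ≤ μ (X \ B g) + μ (X \ B h) + μ (X \ B (g * h)) := by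
        calc t ≤ μ ((X \ B g) ∪ (X \ B h) ∪ (X \ B (g * h))) := measure_mono hcover
        _ ≤ μ ((X \ B g) ∪ (X \ B h)) + μ (X \ B (g * h)) := measure_union_le _ _
        _ ≤ μ (X \ B g) + μ (X \ B h) + μ (X \ B (g * h)) :=
            add_le_add_left (measure_union_le _ _) _
      have hlt : μ (X \ B g) + μ (X \ B h) + μ (X \ B (g * h)) < t := by
        have h8 : (8 : ENNReal) * ε = t := by
          rw [hε, ENNReal.mul_div_cancel' (by norm_num) (by norm_num)]
        calc μ (X \ B g) + μ (X \ B h) + μ (X \ B (g * h))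
            < 2 * ε + 2 * ε + 2 * ε := by
              refine ENNReal.add_lt_add (ENNReal.add_lt_add ?_ ?_) ?_
              · exact hdiff g hgV
              · exact hdiff h hhV
              · exact hdiff (g * h) hghV
        _ = 6 * ε := by ring
        _ < 8 * ε := by
              refine ENNReal.mul_lt_mul_iff_left hεne hεtop |>.mpr ?_
              norm_num
        _ = t := h8
      exact absurd hle (not_le.mpr hlt)
    obtain ⟨x, ⟨hxg, hxh⟩, hxgh⟩ := hne
    have e1 : x * g * x⁻¹ = g⁻¹ := hIx g x hxg
    have e2 : x * h * x⁻¹ = h⁻¹ := hIx h x hxh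
    have e3 : x * (g * h) * x⁻¹ = (g * h)⁻¹ := hIx (g * h) x hxgh
    have e4 : (g * h)⁻¹ = g⁻¹ * h⁻¹ := by
      rw [← e3, ← e1, ← e2]; group
    calc g * h = ((g * h)⁻¹)⁻¹ := by rw [inv_inv]
    _ = (g⁻¹ * h⁻¹)⁻¹ := by rw [e4]
    _ = h * g := by rw [mul_inv_rev, inv_inv, inv_inv]
  -- construct the subgroup
  set H₀ : Subgroup G := Subgroup.closure W with hH₀
  have hH₀open : IsOpen (H₀ : Set G) := by
    apply Subgroup.isOpen_of_mem_nhds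
    exact Filter.mem_of_superset (hWopen.mem_nhds hW1)
      (fun x hx => Subgroup.subset_closure hx)
  have hH₀comm : ∀ a ∈ H₀, ∀ b ∈ H₀, a * b = b * a := by
    intro a ha b hb
    refine Subgroup.closure_induction₂
      (p := fun x y _ _ => x * y = y * x)
      (fun x y hx hy => hcommW x hx y hy)
      (fun x _ => by show (1 : G) * x = x * 1; rw [one_mul, mul_one])
      (fun x _ => by show x * 1 = (1 : G) * x; rw [one_mul, mul_one])
      (fun x y z _ _ _ h1 h2 => by
        show (x * y) * z = z * (x * y)
        have h1' : x * z = z * x := h1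
        have h2' : y * z = z * y := h2
        rw [mul_assoc, h2', ← mul_assoc, h1', mul_assoc])
      (fun y z x _ _ _ h1 h2 => by
        show x * (y * z) = (y * z) * x
        have h1' : x * y = y * x := h1
        have h2' : x * z = z * x := h2
        rw [← mul_assoc, h1', mul_assoc, h2', ← mul_assoc])
      (fun x y _ _ h => by
        show x⁻¹ * y = y * x⁻¹
        exact (Commute.inv_left (h : Commute x y)).eq)
      (fun x y _ _ h => by
        show x * y⁻¹ = y⁻¹ * x
        exact (Commute.inv_right (h : Commute x y)).eq)
      ha hb
  have : Finite (G ⧸ H₀) := Subgroup.quotient_finite_of_isOpen H₀ hH₀open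
  have : H₀.FiniteIndex := H₀.finiteIndex_of_finite_quotient
  refine ⟨H₀.normalCore, ?_, Subgroup.normalCore_normal H₀, ?_⟩
  · exact Subgroup.isOpen_of_isClosed_of_finiteIndex _
      (Subgroup.normalCore_isClosed H₀ (H₀.isClosed_of_isOpen hH₀open))
  · intro a ha b hb
    exact hH₀comm a (H₀.normalCore_le ha) b (H₀.normalCore_le hb)
end

section
/- Let G be a profinite group having an automorphism α such that X = {x ∈ G : α(x) = x⁻¹} is measurable with positive Haar measure. Then there exist an open abelian subgroup A of G and an element t ∈ X such that tA ⊆ X. -/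
open MeasureTheory

/-- If four measurable subsets of `Us` each have measure more than `3/4` of that of `Us`
(in the scale-free form `3 * μ Us < 4 * μ Sᵢ`), then their intersection is nonempty. -/
lemma aux_inter4 {G : Type*} [MeasurableSpace G] (μ : Measure G)
    {Us S1 S2 S3 S4 : Set G}
    (hfin : μ Us ≠ ⊤)
    (hm1 : MeasurableSet S1) (hm2 : MeasurableSet S2)
    (hm3 : MeasurableSet S3) (hm4 : MeasurableSet S4)
    (hs1 : S1 ⊆ Us) (hs2 : S2 ⊆ Us) (hs3 : S3 ⊆ Us) (hs4 : S4 ⊆ Us)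
    (h1 : 3 * μ Us < 4 * μ S1) (h2 : 3 * μ Us < 4 * μ S2)
    (h3 : 3 * μ Us < 4 * μ S3) (h4 : 3 * μ Us < 4 * μ S4) :
    (S1 ∩ S2 ∩ S3 ∩ S4).Nonempty := by
  by_contra hne
  rw [Set.not_nonempty_iff_eq_empty] at hne
  have key : ∀ (S : Set G), MeasurableSet S → S ⊆ Us → 3 * μ Us < 4 * μ S →
      4 * μ (Us \ S) < μ Us := by
    intro S hm hs h
    have hd : μ (Us \ S) + μ S ≤ μ Us := by
      rw [← measure_union Set.disjoint_sdiff_left hm]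
      refine measure_mono ?_
      rintro x (hx | hx)
      · exact hx.1
      · exact hs hx
    have h4d : 4 * μ (Us \ S) + 4 * μ S ≤ 4 * μ Us := by
      rw [← mul_add]
      exact mul_le_mul_right hd 4
    by_contra hcon
    push_neg at hcon
    have hlt : μ Us + 3 * μ Us < 4 * μ (Us \ S) + 4 * μ S :=
      ENNReal.add_lt_add_of_le_of_lt hfin hcon h
    have heq : μ Us + 3 * μ Us = 4 * μ Us := by ring
    rw [heq] at hlt
    exact absurd (lt_of_lt_of_le hlt h4d) (lt_irrefl _)
  have k1 := key S1 hm1 hs1 h1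
  have k2 := key S2 hm2 hs2 h2
  have k3 := key S3 hm3 hs3 h3
  have k4 := key S4 hm4 hs4 h4
  have hcov : Us ⊆ (Us \ S1) ∪ ((Us \ S2) ∪ ((Us \ S3) ∪ (Us \ S4))) := by
    intro x hx
    by_cases hx1 : x ∈ S1
    · by_cases hx2 : x ∈ S2
      · by_cases hx3 : x ∈ S3
        · by_cases hx4 : x ∈ S4
          · exact absurd (hne ▸ ⟨⟨⟨hx1, hx2⟩, hx3⟩, hx4⟩ : x ∈ (∅ : Set G)) (Set.notMem_empty x)
          · exact Or.inr (Or.inr (Or.inr ⟨hx, hx4⟩))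
        · exact Or.inr (Or.inr (Or.inl ⟨hx, hx3⟩))
      · exact Or.inr (Or.inl ⟨hx, hx2⟩)
    · exact Or.inl ⟨hx, hx1⟩
  have hsum : μ Us ≤ μ (Us \ S1) + (μ (Us \ S2) + (μ (Us \ S3) + μ (Us \ S4))) := by
    calc μ Us ≤ μ ((Us \ S1) ∪ ((Us \ S2) ∪ ((Us \ S3) ∪ (Us \ S4)))) := measure_mono hcov
      _ ≤ _ := by
        refine (measure_union_le _ _).trans ?_
        gcongr
        refine (measure_union_le _ _).trans ?_
        gcongr
        exact measure_union_le _ _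
  have h4sum : 4 * μ Us ≤
      4 * μ (Us \ S1) + (4 * μ (Us \ S2) + (4 * μ (Us \ S3) + 4 * μ (Us \ S4))) := by
    calc 4 * μ Us ≤ 4 * (μ (Us \ S1) + (μ (Us \ S2) + (μ (Us \ S3) + μ (Us \ S4)))) :=
          mul_le_mul_right hsum 4
      _ = _ := by ring
  have hfinal : 4 * μ (Us \ S1) + (4 * μ (Us \ S2) + (4 * μ (Us \ S3) + 4 * μ (Us \ S4)))
      < μ Us + (μ Us + (μ Us + μ Us)) :=
    ENNReal.add_lt_add k1 (ENNReal.add_lt_add k2 (ENNReal.add_lt_add k3 k4))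
  have heq2 : μ Us + (μ Us + (μ Us + μ Us)) = 4 * μ Us := by ring
  rw [heq2] at hfinal
  exact absurd (h4sum.trans_lt hfinal) (lt_irrefl _)

/-- Density lemma: there is an open subgroup `U` and a point `t ∈ X` such that the
translated part of `X` fills up more than `3/4` of `U`. -/
lemma aux_density {G : Type*} [Group G] [TopologicalSpace G] [IsTopologicalGroup G]
    [CompactSpace G] [T2Space G] [TotallyDisconnectedSpace G]
    [MeasurableSpace G] [BorelSpace G]
    (μ : Measure G) [μ.IsHaarMeasure] [IsProbabilityMeasure μ]
    (X : Set G) (hmeas : MeasurableSet X) (hpos : 0 < μ X) :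
    ∃ (U : Subgroup G) (t : G), IsOpen (U : Set G) ∧ t ∈ X ∧
      3 * μ (U : Set G) < 4 * μ ((U : Set G) ∩ (fun u => t * u) ⁻¹' X) := by
  obtain ⟨K, hKX, hKcomp, hKpos⟩ := hmeas.exists_lt_isCompact hpos
  have hKmeas : MeasurableSet K := hKcomp.isClosed.measurableSet
  have hKfin : μ K ≠ ⊤ := measure_ne_top μ K
  have hεne : μ K / 4 ≠ 0 := by
    simp only [ne_eq, ENNReal.div_eq_zero_iff]
    push_neg
    exact ⟨hKpos.ne', by norm_num⟩
  obtain ⟨O, hKO, hOopen, hOlt⟩ := K.exists_isOpen_lt_add hKfin hεne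
  have hO3 : 3 * μ O < 4 * μ K := by
    have hd : 3 * (μ K / 4) ≤ μ K := by
      calc 3 * (μ K / 4) ≤ 3 * (μ K / 3) :=
            mul_le_mul_right (ENNReal.div_le_div_left (by norm_num) _) 3
        _ ≤ μ K := ENNReal.mul_div_le
    calc 3 * μ O < 3 * (μ K + μ K / 4) := by
          refine ENNReal.mul_lt_mul_right (by norm_num) (by norm_num) ?_
          exact hOlt
      _ = 3 * μ K + 3 * (μ K / 4) := by ring
      _ ≤ 3 * μ K + μ K := by gcongr
      _ = 4 * μ K := by ring
  have hHk : ∀ k : G, k ∈ K → ∃ H : Subgroup G, IsOpen (H : Set G) ∧ ∀ h ∈ H, k * h ∈ O := by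
    intro k hk
    obtain ⟨V, hVclopen, hkV, hVO⟩ := compact_exists_isClopen_in_isOpen hOopen (hKO hk)
    have hW : IsClopen ((fun x => k * x) ⁻¹' V) := hVclopen.preimage (continuous_mul_left k)
    have h1W : (1:G) ∈ (fun x => k * x) ⁻¹' V := by simpa using hkV
    obtain ⟨H, hH⟩ := IsTopologicalGroup.exist_openNormalSubgroup_sub_clopen_nhds_of_one hW h1W
    exact ⟨H.toSubgroup, H.toOpenSubgroup.isOpen, fun h hh => hVO (hH hh)⟩
  choose Hf hHopen hHprop using hHk
  set N : K → Set G := fun k => (fun x => (k : G)⁻¹ * x) ⁻¹' (Hf k k.2 : Set G) with hN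
  have hNopen : ∀ k : K, IsOpen (N k) :=
    fun k => (hHopen k k.2).preimage (continuous_mul_left _)
  have hcover : K ⊆ ⋃ k : K, N k := by
    intro x hx
    exact Set.mem_iUnion.2 ⟨⟨x, hx⟩, by simp [hN, (Hf x hx).one_mem]⟩
  obtain ⟨F, hF⟩ := hKcomp.elim_finite_subcover N hNopen hcover
  set U : Subgroup G := F.inf fun k => Hf k k.2 with hU
  have hUopen : IsOpen (U : Set G) := by
    have : (U : Set G) = ⋂ k ∈ F, (Hf k k.2 : Set G) := by
      ext x
      simp [hU, Finset.inf_eq_iInf, Subgroup.mem_iInf, Set.mem_iInter]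
    rw [this]
    exact isOpen_biInter_finset fun k _ => hHopen k k.2
  have hUle : ∀ k ∈ F, U ≤ Hf k k.2 := fun k hk => Finset.inf_le hk
  haveI : Finite (G ⧸ U) := U.quotient_finite_of_isOpen hUopen
  set C : G ⧸ U → Set G := fun c => QuotientGroup.mk ⁻¹' {c} with hC
  have hCset : ∀ g : G, C (QuotientGroup.mk g) = (fun x => g⁻¹ * x) ⁻¹' (U : Set G) := by
    intro g
    ext x
    simp only [hC, Set.mem_preimage, Set.mem_singleton_iff, SetLike.mem_coe]
    rw [eq_comm, QuotientGroup.eq]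
  have hCmeas : ∀ c : G ⧸ U, MeasurableSet (C c) := by
    intro c
    obtain ⟨g, rfl⟩ := QuotientGroup.mk_surjective c
    rw [hCset g]
    exact hUopen.measurableSet.preimage (measurable_const_mul _)
  have hCμ' : ∀ c : G ⧸ U, μ (C c) = μ (U : Set G) := by
    intro c
    obtain ⟨g, rfl⟩ := QuotientGroup.mk_surjective c
    rw [hCset g]
    exact measure_preimage_mul μ g⁻¹ _
  have hCO : ∀ c : G ⧸ U, (K ∩ C c).Nonempty → C c ⊆ O := by
    rintro c ⟨k0, hk0K, hk0C⟩ x hx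
    obtain ⟨Nk, hNk, hk0N⟩ := Set.mem_iUnion₂.1 (hF hk0K)
    have h1 : (Nk : G)⁻¹ * k0 ∈ Hf Nk Nk.2 := hk0N
    have hxc : QuotientGroup.mk x = c := hx
    have hkc : QuotientGroup.mk k0 = c := hk0C
    have h2 : k0⁻¹ * x ∈ U := by
      rw [← QuotientGroup.eq]
      rw [hkc, hxc]
    have h3 : (Nk : G)⁻¹ * x ∈ Hf Nk Nk.2 := by
      have := mul_mem h1 (hUle Nk hNk h2)
      simpa [mul_assoc] using this
    have := hHprop Nk Nk.2 _ h3
    simpa using this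
  classical
  set S : Finset (G ⧸ U) := Set.Finite.toFinset (Set.toFinite {c : G ⧸ U | (K ∩ C c).Nonempty})
    with hS
  have hmemS : ∀ c : G ⧸ U, c ∈ S ↔ (K ∩ C c).Nonempty := by
    intro c; simp [hS]
  have hKsub : K ⊆ ⋃ c ∈ S, K ∩ C c := by
    intro x hx
    refine Set.mem_biUnion ?_ ⟨hx, rfl⟩
    exact (hmemS _).2 ⟨x, hx, rfl⟩
  have hdisj : (S : Set (G ⧸ U)).PairwiseDisjoint C := by
    intro c _ c' _ hcc'
    refine Set.disjoint_left.2 fun x hx hx' => hcc' ?_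
    have h1 : QuotientGroup.mk x = c := hx
    have h2 : QuotientGroup.mk x = c' := hx'
    rw [← h1, h2]
  obtain ⟨c, hcS, hc⟩ : ∃ c ∈ S, 3 * μ (U : Set G) < 4 * μ (K ∩ C c) := by
    by_contra hcon
    push_neg at hcon
    have h1 : 4 * μ K ≤ ∑ c ∈ S, 4 * μ (K ∩ C c) := by
      rw [← Finset.mul_sum]
      refine mul_le_mul_right ((measure_mono hKsub).trans ?_) 4
      exact measure_biUnion_finset_le S _
    have h2 : ∑ c ∈ S, 4 * μ (K ∩ C c) ≤ ∑ c ∈ S, 3 * μ (C c) := by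
      refine Finset.sum_le_sum fun c hcS => ?_
      rw [hCμ' c]
      exact hcon c hcS
    have h3 : ∑ c ∈ S, 3 * μ (C c) ≤ 3 * μ O := by
      rw [← Finset.mul_sum]
      refine mul_le_mul_right ?_ 3
      rw [← measure_biUnion_finset hdisj fun c _ => hCmeas c]
      refine measure_mono ?_
      refine Set.iUnion₂_subset fun c hcS => hCO c ((hmemS c).1 hcS)
    have := (h1.trans (h2.trans h3)).trans_lt hO3
    exact absurd this (lt_irrefl _)
  obtain ⟨t, htK, htC⟩ := (hmemS c).1 hcS
  have hct : c = QuotientGroup.mk t := (htC : QuotientGroup.mk t = c).symm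
  refine ⟨U, t, hUopen, hKX htK, ?_⟩
  calc 3 * μ (U : Set G) < 4 * μ (K ∩ C c) := hc
    _ ≤ 4 * μ ((U : Set G) ∩ (fun u => t * u) ⁻¹' X) := by
      refine mul_le_mul_right ?_ 4
      have heq : (fun u => t * u) ⁻¹' (K ∩ C c) ⊆ (U : Set G) ∩ (fun u => t * u) ⁻¹' X := by
        rintro u ⟨huK, huC⟩
        constructor
        · rw [hct, hCset t] at huC
          simpa [mul_assoc] using huC
        · exact hKX huK
      calc μ (K ∩ C c) = μ ((fun u => t * u) ⁻¹' (K ∩ C c)) := (measure_preimage_mul μ t _).symm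
        _ ≤ μ ((U : Set G) ∩ (fun u => t * u) ⁻¹' X) := measure_mono heq

theorem stmt_7 {G : Type*} [Group G] [TopologicalSpace G] [IsTopologicalGroup G]
    [CompactSpace G] [T2Space G] [TotallyDisconnectedSpace G]
    [MeasurableSpace G] [BorelSpace G]
    (μ : Measure G) [μ.IsHaarMeasure] [IsProbabilityMeasure μ]
    (α : G ≃* G)
    (hmeas : MeasurableSet {x : G | α x = x⁻¹})
    (hpos : 0 < μ {x : G | α x = x⁻¹}) :
    ∃ A : Subgroup G, IsOpen (A : Set G) ∧ (∀ a ∈ A, ∀ b ∈ A, a * b = b * a) ∧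
      ∃ t ∈ {x : G | α x = x⁻¹}, ∀ a ∈ A, t * a ∈ {x : G | α x = x⁻¹} := by
  set X : Set G := {x : G | α x = x⁻¹} with hX
  obtain ⟨U, t, hUopen, htX, hUdense⟩ := aux_density μ X hmeas hpos
  have hαt : α t = t⁻¹ := htX
  set Z : Set G := (U : Set G) ∩ (fun u => t * u) ⁻¹' X with hZ
  have hZmeas : MeasurableSet Z :=
    hUopen.measurableSet.inter (hmeas.preimage (measurable_const_mul t))
  have hZsub : Z ⊆ (U : Set G) := Set.inter_subset_left
  have hZfromU : ∀ u, u ∈ Z → u ∈ U := fun u hu => hu.1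
  have hZt : ∀ u, u ∈ Z → t * u ∈ X := fun u hu => hu.2
  have hUfin : μ (U : Set G) ≠ ⊤ := measure_ne_top μ _
  -- algebra: membership condition
  have halg : ∀ u : G, t * u ∈ X → α u = t * u⁻¹ * t⁻¹ := by
    intro u hu
    have h1 : α (t * u) = (t * u)⁻¹ := hu
    rw [map_mul, hαt] at h1
    calc α u = t * (t⁻¹ * α u) := by group
      _ = t * (t * u)⁻¹ := by rw [h1]
      _ = t * u⁻¹ * t⁻¹ := by group
  -- three-in-X implies commuting
  have hcomm3 : ∀ u v : G, t * u ∈ X → t * v ∈ X → t * (u * v) ∈ X → u * v = v * u := by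
    intro u v hu hv huv
    have h4 : α (u * v) = α u * α v := map_mul α u v
    rw [halg u hu, halg v hv, halg _ huv] at h4
    have h4' : t * (u * v)⁻¹ * t⁻¹ = t * (u⁻¹ * v⁻¹) * t⁻¹ := by
      rw [h4]; group
    have h5 : (u * v)⁻¹ = u⁻¹ * v⁻¹ := mul_left_cancel (mul_right_cancel h4')
    have h6 : (u * v)⁻¹ = (v * u)⁻¹ := by rw [h5, ← mul_inv_rev]
    exact inv_injective h6
  -- commuting pairs of Z multiply into Z
  have hZmul : ∀ u v : G, u ∈ Z → v ∈ Z → u * v = v * u → u * v ∈ Z := by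
    intro u v hu hv huv
    refine ⟨mul_mem hu.1 hv.1, ?_⟩
    have hinv : v⁻¹ * u⁻¹ = u⁻¹ * v⁻¹ := by rw [← mul_inv_rev, ← mul_inv_rev, huv]
    show α (t * (u * v)) = (t * (u * v))⁻¹
    rw [map_mul, map_mul, hαt, halg u hu.2, halg v hv.2]
    calc t⁻¹ * (t * u⁻¹ * t⁻¹ * (t * v⁻¹ * t⁻¹)) = u⁻¹ * v⁻¹ * t⁻¹ := by group
      _ = v⁻¹ * u⁻¹ * t⁻¹ := by rw [hinv]
      _ = (t * (u * v))⁻¹ := by group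
  have hZinv : ∀ u : G, u ∈ Z → u⁻¹ ∈ Z := by
    intro u hu
    refine ⟨inv_mem hu.1, ?_⟩
    show α (t * u⁻¹) = (t * u⁻¹)⁻¹
    rw [map_mul, hαt, map_inv, halg u hu.2]
    group
  -- all elements of Z commute
  have hZcomm : ∀ u v : G, u ∈ Z → v ∈ Z → u * v = v * u := by
    intro u v hu hv
    have hμ2 : μ ((fun w => u * w) ⁻¹' Z) = μ Z := measure_preimage_mul μ u Z
    have hμ3 : μ ((fun w => v * w) ⁻¹' Z) = μ Z := measure_preimage_mul μ v Z
    have hμ4 : μ ((fun w => (u * v) * w) ⁻¹' Z) = μ Z := measure_preimage_mul μ (u * v) Z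
    have hsub2 : (fun w => u * w) ⁻¹' Z ⊆ (U : Set G) := by
      intro w hw
      have : u * w ∈ U := (hZfromU _ hw)
      simpa using mul_mem (inv_mem hu.1) this
    have hsub3 : (fun w => v * w) ⁻¹' Z ⊆ (U : Set G) := by
      intro w hw
      have : v * w ∈ U := (hZfromU _ hw)
      simpa using mul_mem (inv_mem hv.1) this
    have hsub4 : (fun w => (u * v) * w) ⁻¹' Z ⊆ (U : Set G) := by
      intro w hw
      have : (u * v) * w ∈ U := (hZfromU _ hw)
      simpa [mul_assoc] using mul_mem (inv_mem (mul_mem hu.1 hv.1)) this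
    obtain ⟨w, hw⟩ := aux_inter4 μ hUfin hZmeas
      (hZmeas.preimage (measurable_const_mul u))
      (hZmeas.preimage (measurable_const_mul v))
      (hZmeas.preimage (measurable_const_mul (u * v)))
      hZsub hsub2 hsub3 hsub4
      hUdense (by rw [hμ2]; exact hUdense) (by rw [hμ3]; exact hUdense)
      (by rw [hμ4]; exact hUdense)
    obtain ⟨⟨⟨hw1, hw2⟩, hw3⟩, hw4⟩ := hw
    have hw2' : u * w ∈ Z := hw2
    have hw3' : v * w ∈ Z := hw3
    have hw4' : (u * v) * w ∈ Z := hw4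
    have huw : u * w = w * u := hcomm3 u w hu.2 hw1.2 hw2'.2
    have huvw : u * (v * w) = (v * w) * u := by
      refine hcomm3 u (v * w) hu.2 hw3'.2 ?_
      have := hw4'.2
      rwa [show (u * v) * w = u * (v * w) by group] at this
    have : (u * v) * w = (v * u) * w := by
      calc (u * v) * w = u * (v * w) := by group
        _ = (v * w) * u := huvw
        _ = v * (w * u) := by group
        _ = v * (u * w) := by rw [← huw]
        _ = (v * u) * w := by group
    exact mul_right_cancel this
  -- every element of U is in Z
  have hUZ : ∀ g : G, g ∈ U → g ∈ Z := by
    by_contra hcon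
    push_neg at hcon
    obtain ⟨g, hgU, hgZ⟩ := hcon
    have hgZsub : (fun x => g⁻¹ * x) ⁻¹' Z ⊆ (U : Set G) := by
      intro x hx
      have h1 : g⁻¹ * x ∈ U := hZfromU _ hx
      have := mul_mem hgU h1
      simpa using this
    have hgZμ : μ ((fun x => g⁻¹ * x) ⁻¹' Z) = μ Z := measure_preimage_mul μ g⁻¹ Z
    have hdisj : Disjoint Z ((fun x => g⁻¹ * x) ⁻¹' Z) := by
      refine Set.disjoint_left.2 fun x hx hx' => ?_
      have h1 : g⁻¹ * x ∈ Z := hx'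
      have h2 : (g⁻¹ * x)⁻¹ ∈ Z := hZinv _ h1
      have h3 : x * (g⁻¹ * x)⁻¹ ∈ Z := hZmul _ _ hx h2 (hZcomm _ _ hx h2)
      have h4 : x * (g⁻¹ * x)⁻¹ = g := by group
      rw [h4] at h3
      exact hgZ h3
    have hunion : μ Z + μ Z ≤ μ (U : Set G) := by
      calc μ Z + μ Z = μ Z + μ ((fun x => g⁻¹ * x) ⁻¹' Z) := by rw [hgZμ]
        _ = μ (Z ∪ (fun x => g⁻¹ * x) ⁻¹' Z) :=
            (measure_union hdisj (hZmeas.preimage (measurable_const_mul g⁻¹))).symm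
        _ ≤ μ (U : Set G) := measure_mono (Set.union_subset hZsub hgZsub)
    have h2 : 4 * μ Z ≤ 2 * μ (U : Set G) := by
      calc 4 * μ Z = 2 * (μ Z + μ Z) := by ring
        _ ≤ 2 * μ (U : Set G) := mul_le_mul_right hunion 2
    have h3 : 2 * μ (U : Set G) ≤ 3 * μ (U : Set G) := by
      refine mul_le_mul_left ?_ _
      norm_num
    exact absurd (hUdense.trans_le ((h2.trans h3))) (lt_irrefl _)
  exact ⟨U, hUopen, fun a ha b hb => hZcomm a b (hUZ a ha) (hUZ b hb),
    t, htX, fun a ha => hZt a (hUZ a ha)⟩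
end

section
/- In any group, if elements a, b, x satisfy x³ = (bx)³ = (ax)³ = (a⁻¹x)³ = (ab⁻¹x)³ = (ba⁻¹x)³ = (abx)³ = (b⁻¹a⁻¹x)³ = 1, then [a,b,b] = 1. -/
open scoped commutatorElement

theorem stmt_8 {G : Type*} [Group G] (a b x : G)
    (h1 : x ^ 3 = 1) (h2 : (b * x) ^ 3 = 1) (h3 : (a * x) ^ 3 = 1)
    (h4 : (a⁻¹ * x) ^ 3 = 1) (h5 : (a * b⁻¹ * x) ^ 3 = 1)
    (h6 : (b * a⁻¹ * x) ^ 3 = 1) (h7 : (a * b * x) ^ 3 = 1)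
    (h8 : (b⁻¹ * a⁻¹ * x) ^ 3 = 1) :
    ⁅⁅a, b⁆, b⁆ = 1 := by
  have H1 : x * x * x = 1 := by rw [← h1, pow_three]; group
  have H2 : b * x * b * x * b * x = 1 := by rw [← h2, pow_three]; group
  have H3 : a * x * a * x * a * x = 1 := by rw [← h3, pow_three]; group
  have H4 : a⁻¹ * x * a⁻¹ * x * a⁻¹ * x = 1 := by rw [← h4, pow_three]; group
  have H5 : a * b⁻¹ * x * a * b⁻¹ * x * a * b⁻¹ * x = 1 := by rw [← h5, pow_three]; group
  have H6 : b * a⁻¹ * x * b * a⁻¹ * x * b * a⁻¹ * x = 1 := by rw [← h6, pow_three]; group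
  have H7 : a * b * x * a * b * x * a * b * x = 1 := by rw [← h7, pow_three]; group
  have H8 : b⁻¹ * a⁻¹ * x * b⁻¹ * a⁻¹ * x * b⁻¹ * a⁻¹ * x = 1 := by rw [← h8, pow_three]; group
  have key : ⁅⁅a, b⁆, b⁆ = (a * b * a⁻¹ * (b * x * b * x * b * x) * (a * b * a⁻¹)⁻¹) *
      (a * b * a⁻¹ * x⁻¹ * b⁻¹ * x⁻¹ * b⁻¹ * (b * a⁻¹ * x * b * a⁻¹ * x * b * a⁻¹ * x)⁻¹ * (a * b * a⁻¹ * x⁻¹ * b⁻¹ * x⁻¹ * b⁻¹)⁻¹) *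
      (a * b * a⁻¹ * x⁻¹ * b⁻¹ * (x * x * x)⁻¹ * (a * b * a⁻¹ * x⁻¹ * b⁻¹)⁻¹) *
      (a * b * a⁻¹ * x⁻¹ * b⁻¹ * x * x * (a⁻¹ * x * a⁻¹ * x * a⁻¹ * x) * (a * b * a⁻¹ * x⁻¹ * b⁻¹ * x * x)⁻¹) *
      (a * b * a⁻¹ * (a * x * a * x * a * x)⁻¹ * (a * b * a⁻¹)⁻¹) *
      (a * b * x * a * x * (a * b⁻¹ * x * a * b⁻¹ * x * a * b⁻¹ * x) * (a * b * x * a * x)⁻¹) *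
      (a * b * x * a * b * x * a * b * x) *
      (x⁻¹ * b⁻¹ * a⁻¹ * (a * x * a * x * a * x)⁻¹ * (x⁻¹ * b⁻¹ * a⁻¹)⁻¹) *
      (x⁻¹ * b⁻¹ * x * a * b * (b⁻¹ * a⁻¹ * x * b⁻¹ * a⁻¹ * x * b⁻¹ * a⁻¹ * x)⁻¹ * (x⁻¹ * b⁻¹ * x * a * b)⁻¹) *
      (x⁻¹ * b⁻¹ * x * x * b⁻¹ * (a⁻¹ * x * a⁻¹ * x * a⁻¹ * x) * (x⁻¹ * b⁻¹ * x * x * b⁻¹)⁻¹) *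
      (x⁻¹ * b⁻¹ * (x * x * x) * (x⁻¹ * b⁻¹)⁻¹) *
      (b * x * b * x * b * x)⁻¹ := by
    group
  rw [key, H1, H2, H3, H4, H5, H6, H7, H8]
  group
end

section
/- Every 2-Engel group is nilpotent of class at most 3. -/
open scoped commutatorElement

section Levi

variable {G : Type*} [Group G]

private lemma levi_cc (h : ∀ x y : G, ⁅⁅x, y⁆, y⁆ = 1) (x g : G) :
    Commute x (g * x * g⁻¹) := by
  have h1 : Commute ⁅g, x⁆ x := commutatorElement_eq_one_iff_commute.mp (h g x)
  rw [show ⁅g, x⁆ = g * x * g⁻¹ * x⁻¹ by group] at h1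
  have h3 : Commute (g * x * g⁻¹ * x⁻¹ * x) x := h1.mul_left (Commute.refl x)
  rw [inv_mul_cancel_right] at h3
  exact h3.symm

private lemma levi_cc2 (h : ∀ x y : G, ⁅⁅x, y⁆, y⁆ = 1) (x g k : G) :
    Commute (g * x * g⁻¹) (k * x * k⁻¹) := by
  have h1 := levi_cc h (k * x * k⁻¹) (g * k⁻¹)
  rw [show g * k⁻¹ * (k * x * k⁻¹) * (g * k⁻¹)⁻¹ = g * x * g⁻¹ by group] at h1
  exact h1.symm

private lemma levi_Ncomm (h : ∀ x y : G, ⁅⁅x, y⁆, y⁆ = 1) (x : G) :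
    ∀ u ∈ Subgroup.normalClosure ({x} : Set G),
      ∀ v ∈ Subgroup.normalClosure ({x} : Set G), Commute u v := by
  intro u hu v hv
  have base : ∀ a ∈ Group.conjugatesOfSet ({x} : Set G),
      ∀ b ∈ Group.conjugatesOfSet ({x} : Set G), Commute a b := by
    intro a ha b hb
    rw [Group.mem_conjugatesOfSet_iff] at ha hb
    obtain ⟨a', ha', hca⟩ := ha
    obtain ⟨b', hb', hcb⟩ := hb
    rw [Set.mem_singleton_iff] at ha' hb'
    subst ha'; subst hb'
    rw [isConj_iff] at hca hcb
    obtain ⟨c, rfl⟩ := hca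
    obtain ⟨d, rfl⟩ := hcb
    exact levi_cc2 h _ c d
  exact Subgroup.closure_induction₂
    (fun a b ha hb => base a ha b hb)
    (fun a _ => Commute.one_left a) (fun a _ => Commute.one_right a)
    (fun a b c _ _ _ h1 h2 => h1.mul_left h2)
    (fun a b c _ _ _ h1 h2 => h1.mul_right h2)
    (fun a b _ _ h1 => h1.inv_left)
    (fun a b _ _ h1 => h1.inv_right) hu hv

private lemma levi_mem_self (x : G) : x ∈ Subgroup.normalClosure ({x} : Set G) :=
  Subgroup.subset_normalClosure rfl

private lemma levi_conj_mem {x u : G}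
    (hu : u ∈ Subgroup.normalClosure ({x} : Set G)) (c : G) :
    c * u * c⁻¹ ∈ Subgroup.normalClosure ({x} : Set G) :=
  Subgroup.normalClosure_normal.conj_mem u hu c

private lemma levi_comm_mem {x u : G}
    (hu : u ∈ Subgroup.normalClosure ({x} : Set G)) (c : G) :
    ⁅u, c⁆ ∈ Subgroup.normalClosure ({x} : Set G) := by
  rw [show ⁅u, c⁆ = u * (c * u⁻¹ * c⁻¹) by group]
  exact Subgroup.mul_mem _ hu (levi_conj_mem (Subgroup.inv_mem _ hu) c)

private lemma levi_comm_mem_right (a x : G) :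
    ⁅a, x⁆ ∈ Subgroup.normalClosure ({x} : Set G) := by
  rw [show ⁅a, x⁆ = (a * x * a⁻¹) * x⁻¹ by group]
  exact Subgroup.mul_mem _ (levi_conj_mem (levi_mem_self x) a)
    (Subgroup.inv_mem _ (levi_mem_self x))

private lemma levi_comm_mem_left (a b : G) :
    ⁅a, b⁆ ∈ Subgroup.normalClosure ({a} : Set G) := by
  rw [← commutatorElement_inv b a]
  exact Subgroup.inv_mem _ (levi_comm_mem_right b a)

private lemma levi_engel_N (h : ∀ x y : G, ⁅⁅x, y⁆, y⁆ = 1) {x u : G}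
    (hu : u ∈ Subgroup.normalClosure ({x} : Set G)) : ⁅u, x⁆ = 1 :=
  commutatorElement_eq_one_iff_commute.mpr (levi_Ncomm h x u hu x (levi_mem_self x))

private lemma levi_hom (h : ∀ x y : G, ⁅⁅x, y⁆, y⁆ = 1) {x u v : G}
    (hu : u ∈ Subgroup.normalClosure ({x} : Set G))
    (hv : v ∈ Subgroup.normalClosure ({x} : Set G)) (c : G) :
    ⁅u * v, c⁆ = ⁅u, c⁆ * ⁅v, c⁆ := by
  have hvc : ⁅v, c⁆ ∈ Subgroup.normalClosure ({x} : Set G) := levi_comm_mem hv c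
  have hcu : c * u⁻¹ * c⁻¹ ∈ Subgroup.normalClosure ({x} : Set G) :=
    levi_conj_mem (Subgroup.inv_mem _ hu) c
  have c1 : Commute (⁅v, c⁆) (c * u⁻¹ * c⁻¹) := levi_Ncomm h x _ hvc _ hcu
  calc ⁅u * v, c⁆ = u * (⁅v, c⁆ * (c * u⁻¹ * c⁻¹)) := by group
    _ = u * ((c * u⁻¹ * c⁻¹) * ⁅v, c⁆) := by rw [c1.eq]
    _ = (u * (c * u⁻¹ * c⁻¹)) * ⁅v, c⁆ := by group
    _ = ⁅u, c⁆ * ⁅v, c⁆ := by group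

private lemma levi_inv_left (h : ∀ x y : G, ⁅⁅x, y⁆, y⁆ = 1) (u c : G) :
    ⁅u⁻¹, c⁆ = ⁅u, c⁆⁻¹ := by
  have hc : Commute u⁻¹ (c * u * c⁻¹) := (levi_cc h u c).inv_left
  calc ⁅u⁻¹, c⁆ = u⁻¹ * (c * u * c⁻¹) := by group
    _ = (c * u * c⁻¹) * u⁻¹ := hc.eq
    _ = ⁅u, c⁆⁻¹ := by group

private lemma levi_inv_right (h : ∀ x y : G, ⁅⁅x, y⁆, y⁆ = 1) (a b : G) :
    ⁅a, b⁻¹⁆ = ⁅a, b⁆⁻¹ := by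
  have h2 : Commute ⁅b, a⁆ b :=
    commutatorElement_eq_one_iff_commute.mp (levi_engel_N h (levi_comm_mem_left b a))
  calc ⁅a, b⁻¹⁆ = b⁻¹ * (⁅b, a⁆ * b) := by group
    _ = b⁻¹ * (b * ⁅b, a⁆) := by rw [h2.eq]
    _ = ⁅b, a⁆ := by group
    _ = ⁅a, b⁆⁻¹ := (commutatorElement_inv a b).symm

private lemma levi_vanish (h : ∀ x y : G, ⁅⁅x, y⁆, y⁆ = 1) (p a b : G) :
    ⁅⁅⁅p, a⁆, b⁆, a⁆ = 1 :=
  levi_engel_N h (levi_comm_mem (levi_comm_mem_right p a) b)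

private lemma levi_swap23 (h : ∀ x y : G, ⁅⁅x, y⁆, y⁆ = 1) (p a b : G) :
    ⁅⁅p, a⁆, b⁆ = ⁅⁅p, b⁆, a⁆⁻¹ := by
  have hu : ⁅p, a⁆ ∈ Subgroup.normalClosure ({p} : Set G) := levi_comm_mem_left p a
  have hv : ⁅p, b⁆ ∈ Subgroup.normalClosure ({p} : Set G) := levi_comm_mem_left p b
  have hva : ⁅⁅p, b⁆, a⁆ ∈ Subgroup.normalClosure ({p} : Set G) := levi_comm_mem hv a
  have hvai : (⁅⁅p, b⁆, a⁆)⁻¹ ∈ Subgroup.normalClosure ({p} : Set G) :=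
    Subgroup.inv_mem _ hva
  have hvv : ⁅p, b⁆ * ⁅⁅p, b⁆, a⁆⁻¹ ∈ Subgroup.normalClosure ({p} : Set G) :=
    Subgroup.mul_mem _ hv hvai
  have hm : ⁅p, a * b⁆ = ⁅p, a⁆ * (⁅p, b⁆ * ⁅⁅p, b⁆, a⁆⁻¹) := by
    have c1 : Commute (⁅⁅p, b⁆, a⁆⁻¹) (⁅p, b⁆) := levi_Ncomm h p _ hvai _ hv
    calc ⁅p, a * b⁆ = ⁅p, a⁆ * (a * ⁅p, b⁆ * a⁻¹) := by group
      _ = ⁅p, a⁆ * (⁅⁅p, b⁆, a⁆⁻¹ * ⁅p, b⁆) := by rw [show a * ⁅p, b⁆ * a⁻¹ =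
            ⁅⁅p, b⁆, a⁆⁻¹ * ⁅p, b⁆ by group]
      _ = ⁅p, a⁆ * (⁅p, b⁆ * ⁅⁅p, b⁆, a⁆⁻¹) := by rw [c1.eq]
  have hE : ⁅⁅p, a * b⁆, a * b⁆ = 1 := h p (a * b)
  have e3 : ⁅⁅p, a * b⁆, a * b⁆ = ⁅⁅p, a * b⁆, a⁆ * (a * ⁅⁅p, a * b⁆, b⁆ * a⁻¹) := by
    group
  have hma : ⁅⁅p, a * b⁆, a⁆ = ⁅⁅p, b⁆, a⁆ := by
    rw [hm, levi_hom h hu hvv a, levi_hom h hv hvai a,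
      show ⁅⁅p, a⁆, a⁆ = 1 from h p a, levi_inv_left h ⁅⁅p, b⁆, a⁆ a,
      show ⁅⁅⁅p, b⁆, a⁆, a⁆ = 1 from h ⁅p, b⁆ a]
    simp
  have hmb : ⁅⁅p, a * b⁆, b⁆ = ⁅⁅p, a⁆, b⁆ := by
    rw [hm, levi_hom h hu hvv b, levi_hom h hv hvai b,
      show ⁅⁅p, b⁆, b⁆ = 1 from h p b, levi_inv_left h ⁅⁅p, b⁆, a⁆ b,
      show ⁅⁅⁅p, b⁆, a⁆, b⁆ = 1 from levi_vanish h p b a]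
    simp
  have hconj : a * ⁅⁅p, a⁆, b⁆ * a⁻¹ = ⁅⁅p, a⁆, b⁆ := by
    rw [show a * ⁅⁅p, a⁆, b⁆ * a⁻¹ = ⁅⁅⁅p, a⁆, b⁆, a⁆⁻¹ * ⁅⁅p, a⁆, b⁆ by group,
      levi_vanish h p a b]
    simp
  have final : ⁅⁅p, b⁆, a⁆ * ⁅⁅p, a⁆, b⁆ = 1 := by
    have hthis := hE
    rw [e3, hma, hmb, hconj] at hthis
    exact hthis
  exact eq_inv_of_mul_eq_one_right final

private lemma levi_swap12 (h : ∀ x y : G, ⁅⁅x, y⁆, y⁆ = 1) (a b c : G) :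
    ⁅⁅a, b⁆, c⁆ = ⁅⁅b, a⁆, c⁆⁻¹ := by
  rw [show ⁅b, a⁆ = ⁅a, b⁆⁻¹ from (commutatorElement_inv a b).symm,
    levi_inv_left h ⁅a, b⁆ c, inv_inv]

private lemma levi_cyc (h : ∀ x y : G, ⁅⁅x, y⁆, y⁆ = 1) (x y z : G) :
    ⁅⁅x, y⁆, z⁆ = ⁅⁅y, z⁆, x⁆ := by
  rw [levi_swap23 h y z x, levi_swap12 h y x z, inv_inv]

private lemma levi_HW (h : ∀ x y : G, ⁅⁅x, y⁆, y⁆ = 1) (x y z : G) :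
    ⁅⁅y, x⁆, z⁆ * ⁅⁅z, y⁆, x⁆ * ⁅⁅x, z⁆, y⁆ = 1 := by
  have simp1 : ∀ a b c : G, ⁅⁅a, b⁻¹⁆, c⁻¹⁆ = ⁅⁅a, b⁆, c⁆ := by
    intro a b c
    rw [levi_inv_right h a b, levi_inv_left h ⁅a, b⁆ c⁻¹, levi_inv_right h ⁅a, b⁆ c,
      inv_inv]
  have Tx : ∀ a b c : G, a⁻¹ * ⁅⁅a, b⁆, c⁆ * a = ⁅⁅a, b⁆, c⁆ := by
    intro a b c
    have hc : Commute ⁅⁅a, b⁆, c⁆ a := commutatorElement_eq_one_iff_commute.mp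
      (levi_engel_N h (levi_comm_mem (levi_comm_mem_left a b) c))
    calc a⁻¹ * ⁅⁅a, b⁆, c⁆ * a = a⁻¹ * (⁅⁅a, b⁆, c⁆ * a) := by group
      _ = a⁻¹ * (a * ⁅⁅a, b⁆, c⁆) := by rw [hc.eq]
      _ = ⁅⁅a, b⁆, c⁆ := by group
  have HW : (y⁻¹ * ⁅⁅y, x⁻¹⁆, z⁻¹⁆ * y) * (z⁻¹ * ⁅⁅z, y⁻¹⁆, x⁻¹⁆ * z)
      * (x⁻¹ * ⁅⁅x, z⁻¹⁆, y⁻¹⁆ * x) = 1 := by group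
  rw [simp1 y x z, simp1 z y x, simp1 x z y, Tx y x z, Tx z y x, Tx x z y] at HW
  exact HW

private lemma levi_cube (h : ∀ x y : G, ⁅⁅x, y⁆, y⁆ = 1) (x y z : G) :
    ⁅⁅x, y⁆, z⁆ ^ 3 = 1 := by
  have H := levi_HW h y x z
  -- H : ⁅⁅x,y⁆,z⁆ * ⁅⁅z,x⁆,y⁆ * ⁅⁅y,z⁆,x⁆ = 1
  rw [levi_cyc h z x y] at H
  rw [← levi_cyc h x y z] at H
  rw [pow_succ, pow_succ, pow_one]
  exact H

private lemma levi_R12 (h : ∀ x y : G, ⁅⁅x, y⁆, y⁆ = 1) (a b c d : G) :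
    ⁅⁅⁅b, a⁆, c⁆, d⁆ = ⁅⁅⁅a, b⁆, c⁆, d⁆⁻¹ := by
  rw [levi_swap12 h b a c, levi_inv_left h ⁅⁅a, b⁆, c⁆ d]

private lemma levi_R23 (h : ∀ x y : G, ⁅⁅x, y⁆, y⁆ = 1) (a b c d : G) :
    ⁅⁅⁅a, c⁆, b⁆, d⁆ = ⁅⁅⁅a, b⁆, c⁆, d⁆⁻¹ := by
  rw [levi_swap23 h a c b, levi_inv_left h ⁅⁅a, b⁆, c⁆ d]

private lemma levi_R34 (h : ∀ x y : G, ⁅⁅x, y⁆, y⁆ = 1) (a b c d : G) :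
    ⁅⁅⁅a, b⁆, d⁆, c⁆ = ⁅⁅⁅a, b⁆, c⁆, d⁆⁻¹ :=
  levi_swap23 h ⁅a, b⁆ d c

private lemma levi_way1 (h : ∀ x y : G, ⁅⁅x, y⁆, y⁆ = 1) (a b c d : G) :
    ⁅⁅a, b⁆, ⁅c, d⁆⁆ = ⁅⁅⁅c, d⁆, b⁆, a⁆⁻¹ := by
  rw [levi_cyc h a b ⁅c, d⁆,
    show ⁅b, ⁅c, d⁆⁆ = ⁅⁅c, d⁆, b⁆⁻¹ from (commutatorElement_inv ⁅c, d⁆ b).symm,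
    levi_inv_left h ⁅⁅c, d⁆, b⁆ a]

private lemma levi_HH (h : ∀ x y : G, ⁅⁅x, y⁆, y⁆ = 1) (a b c d : G) :
    ⁅⁅⁅a, b⁆, d⁆, c⁆ = ⁅⁅⁅c, d⁆, b⁆, a⁆⁻¹ := by
  have w1 := levi_way1 h a b c d
  have w2 := levi_way1 h c d a b
  have e : ⁅⁅c, d⁆, ⁅a, b⁆⁆⁻¹ = ⁅⁅a, b⁆, ⁅c, d⁆⁆ := commutatorElement_inv ⁅c, d⁆ ⁅a, b⁆
  calc ⁅⁅⁅a, b⁆, d⁆, c⁆ = (⁅⁅⁅a, b⁆, d⁆, c⁆⁻¹)⁻¹ := (inv_inv _).symm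
    _ = ⁅⁅c, d⁆, ⁅a, b⁆⁆⁻¹ := by rw [← w2]
    _ = ⁅⁅a, b⁆, ⁅c, d⁆⁆ := e
    _ = ⁅⁅⁅c, d⁆, b⁆, a⁆⁻¹ := w1

private lemma levi_chain (h : ∀ x y : G, ⁅⁅x, y⁆, y⁆ = 1) (a b c d : G) :
    ⁅⁅⁅c, d⁆, b⁆, a⁆ = ⁅⁅⁅a, b⁆, d⁆, c⁆ := by
  rw [levi_R23 h c b d a, levi_R12 h b c d a, levi_R34 h b c a d,
    levi_R23 h b a c d, levi_R12 h a b c d, levi_R34 h a b d c]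
  simp

private lemma levi_sq (h : ∀ x y : G, ⁅⁅x, y⁆, y⁆ = 1) (a b c d : G) :
    ⁅⁅⁅a, b⁆, c⁆, d⁆ ^ 2 = 1 := by
  rw [pow_two, mul_eq_one_iff_eq_inv]
  calc ⁅⁅⁅a, b⁆, c⁆, d⁆ = ⁅⁅⁅d, c⁆, b⁆, a⁆⁻¹ := levi_HH h a b d c
    _ = ⁅⁅⁅a, b⁆, c⁆, d⁆⁻¹ := by rw [levi_chain h a b d c]

private lemma levi_cube4 (h : ∀ x y : G, ⁅⁅x, y⁆, y⁆ = 1) (a b c d : G) :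
    ⁅⁅⁅a, b⁆, c⁆, d⁆ ^ 3 = 1 := by
  have hp : ⁅⁅a, b⁆, c⁆ ∈ Subgroup.normalClosure ({⁅⁅a, b⁆, c⁆} : Set G) :=
    levi_mem_self _
  have h1 : ⁅⁅⁅a, b⁆, c⁆ * ⁅⁅a, b⁆, c⁆, d⁆ = ⁅⁅⁅a, b⁆, c⁆, d⁆ * ⁅⁅⁅a, b⁆, c⁆, d⁆ :=
    levi_hom h hp hp d
  have h2 : ⁅⁅⁅a, b⁆, c⁆ * ⁅⁅a, b⁆, c⁆ * ⁅⁅a, b⁆, c⁆, d⁆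
      = ⁅⁅⁅a, b⁆, c⁆ * ⁅⁅a, b⁆, c⁆, d⁆ * ⁅⁅⁅a, b⁆, c⁆, d⁆ :=
    levi_hom h (Subgroup.mul_mem _ hp hp) hp d
  have hcube : ⁅⁅a, b⁆, c⁆ * ⁅⁅a, b⁆, c⁆ * ⁅⁅a, b⁆, c⁆ = 1 := by
    have := levi_cube h a b c
    rwa [pow_succ, pow_succ, pow_one] at this
  calc ⁅⁅⁅a, b⁆, c⁆, d⁆ ^ 3
      = ⁅⁅⁅a, b⁆, c⁆, d⁆ * ⁅⁅⁅a, b⁆, c⁆, d⁆ * ⁅⁅⁅a, b⁆, c⁆, d⁆ := by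
        rw [pow_succ, pow_succ, pow_one]
    _ = ⁅⁅⁅a, b⁆, c⁆ * ⁅⁅a, b⁆, c⁆ * ⁅⁅a, b⁆, c⁆, d⁆ := by rw [h2, h1]
    _ = ⁅(1 : G), d⁆ := by rw [hcube]
    _ = 1 := by group

private lemma levi_key (h : ∀ x y : G, ⁅⁅x, y⁆, y⁆ = 1) (a b c d : G) :
    ⁅⁅⁅a, b⁆, c⁆, d⁆ = 1 := by
  have h2 := levi_sq h a b c d
  have h3 := levi_cube4 h a b c d
  calc ⁅⁅⁅a, b⁆, c⁆, d⁆
      = (⁅⁅⁅a, b⁆, c⁆, d⁆ ^ 2)⁻¹ * ⁅⁅⁅a, b⁆, c⁆, d⁆ ^ 3 := by group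
    _ = 1 := by rw [h2, h3]; simp

end Levi

theorem stmt_9 {G : Type*} [Group G]
    (h : ∀ x y : G, ⁅⁅x, y⁆, y⁆ = 1) :
    (⊤ : Subgroup G).lowerCentralSeries 3 = ⊥ := by
  have key : ∀ x y z w : G, ⁅⁅⁅x, y⁆, z⁆, w⁆ = 1 := levi_key h
  set C := Subgroup.centralizer ((⊤ : Subgroup G) : Set G) with hCdef
  have conjC : ∀ u : G, u ∈ C → ∀ c : G, c * u * c⁻¹ ∈ C := by
    intro u hu c
    have hmu : c * u = u * c := Subgroup.mem_centralizer_iff.mp hu c (by simp)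
    have : c * u * c⁻¹ = u := by rw [hmu, mul_inv_cancel_right]
    rwa [this]
  have hC : (⊤ : Subgroup G).lowerCentralSeries 2 ≤ C := by
    rw [show (2 : ℕ) = 1 + 1 from rfl, Subgroup.lowerCentralSeries_succ]
    refine Subgroup.commutator_le.mpr ?_
    intro g hg t _
    have hg' : g ∈ Subgroup.closure
        {x : G | ∃ g₁ ∈ (⊤ : Subgroup G), ∃ g₂ ∈ (⊤ : Subgroup G), ⁅g₁, g₂⁆ = x} := hg
    clear hg
    induction hg' using Subgroup.closure_induction with
    | mem x hx =>
      obtain ⟨g₁, -, g₂, -, rfl⟩ := hx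
      refine Subgroup.mem_centralizer_iff.mpr ?_
      intro w _
      exact ((commutatorElement_eq_one_iff_commute.mp (key g₁ g₂ t w)).symm).eq
    | one =>
      rw [show ⁅(1 : G), t⁆ = 1 by group]
      exact Subgroup.one_mem _
    | mul x y _ _ ihx ihy =>
      rw [show ⁅x * y, t⁆ = (x * ⁅y, t⁆ * x⁻¹) * ⁅x, t⁆ by group]
      exact Subgroup.mul_mem _ (conjC _ ihy x) ihx
    | inv x _ ihx =>
      rw [show ⁅x⁻¹, t⁆ = x⁻¹ * ⁅x, t⁆⁻¹ * x by group]
      rw [show (x⁻¹ * ⁅x, t⁆⁻¹ * x : G) = x⁻¹ * ⁅x, t⁆⁻¹ * x⁻¹⁻¹ by rw [inv_inv]]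
      exact conjC _ (Subgroup.inv_mem _ ihx) x⁻¹
  show ⁅(⊤ : Subgroup G).lowerCentralSeries 2, (⊤ : Subgroup G)⁆ = ⊥
  rw [Subgroup.commutator_eq_bot_iff_le_centralizer]
  exact hC
end

section
/- There exists a positive integer ℓ such that every group generated by a symmetric subset X = X⁻¹ containing the identity, with the property that [x,y,y] = 1 for all x, y ∈ X^ℓ, is a 2-Engel group. -/
open Pointwise
open scoped commutatorElement

namespace Engel2

variable {G : Type} [Group G] {X : Set G}

/-! ### pure group identities -/

private lemma pg1 (a b c : G) : ⁅a, b*c⁆ = ⁅a,b⁆ * (b * ⁅a,c⁆ * b⁻¹) := by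
  simp only [commutatorElement_def]; group

private lemma pg2 (a b c : G) : ⁅a*b, c⁆ = (a * ⁅b,c⁆ * a⁻¹) * ⁅a,c⁆ := by
  simp only [commutatorElement_def]; group

private lemma pg4 (a b : G) : ⁅a⁻¹, b⁆ = a⁻¹ * ⁅a,b⁆⁻¹ * a := by
  simp only [commutatorElement_def]; group

private lemma pg5 (a b : G) : ⁅a, b⁻¹⁆ = b⁻¹ * ⁅a,b⁆⁻¹ * b := by
  simp only [commutatorElement_def]; group

private lemma pg6 (a b : G) : ⁅a,b⁆ = (a*b*a⁻¹) * b⁻¹ := by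
  simp only [commutatorElement_def, mul_assoc]

private lemma pg7 (a b : G) : ⁅a,b⁆ = a * (b*a⁻¹*b⁻¹) := by
  simp only [commutatorElement_def]; group

/-! ### commuting helpers -/

private lemma conj_eq {a u : G} (h : Commute a u) : a * u * a⁻¹ = u := by
  rw [h.eq, mul_inv_cancel_right]

private lemma conj_eq' {a u : G} (h : Commute a u) : a⁻¹ * u * a = u := by
  simpa using conj_eq h.inv_left

/-! ### power set helpers -/

lemma one_mem_powT (h1 : (1:G) ∈ X) : ∀ n, (1:G) ∈ X ^ n
  | 0 => by simp
  | (n+1) => by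
      rw [pow_succ]
      simpa using Set.mul_mem_mul (one_mem_powT h1 n) h1

lemma xpow_monoT (h1 : (1:G) ∈ X) {m n : ℕ} (h : m ≤ n) {a : G} (ha : a ∈ X ^ m) :
    a ∈ X ^ n := by
  obtain ⟨k, rfl⟩ := Nat.exists_eq_add_of_le h
  rw [pow_add]
  simpa using Set.mul_mem_mul ha (one_mem_powT h1 k)

lemma mul_mem_powT {m n : ℕ} {a b : G} (ha : a ∈ X^m) (hb : b ∈ X^n) : a*b ∈ X^(m+n) := by
  rw [pow_add]; exact Set.mul_mem_mul ha hb

lemma inv_mem_powT (hinv : X⁻¹ = X) {n : ℕ} {a : G} (ha : a ∈ X^n) : a⁻¹ ∈ X^n := by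
  have h : a⁻¹ ∈ (X^n)⁻¹ := Set.inv_mem_inv.mpr ha
  rwa [← inv_pow, hinv] at h

section Main
variable (h1 : (1:G) ∈ X) (hinv : X⁻¹ = X)
variable (hyp : ∀ x ∈ X ^ (1000:ℕ), ∀ y ∈ X ^ (1000:ℕ), ⁅⁅x, y⁆, y⁆ = 1)

include h1 hyp in
lemma HypC {m n : ℕ} {u v : G} (hu : u ∈ X^m) (hv : v ∈ X^n)
    (hm : m ≤ 1000) (hn : n ≤ 1000) : Commute (u*v*u⁻¹) v := by
  have h := hyp u (xpow_monoT h1 hm hu) v (xpow_monoT h1 hn hv)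
  have h2 : Commute ⁅u,v⁆ v := commutatorElement_eq_one_iff_commute.mp h
  have h3 : Commute (⁅u,v⁆ * v) v := h2.mul_left (Commute.refl v)
  have e : ⁅u,v⁆ * v = u*v*u⁻¹ := by simp only [commutatorElement_def]; group
  rwa [e] at h3

end Main

/-- the subgroup generated by the conjugates of `b` by words of length ≤ K -/
def Acl (X : Set G) (b : G) (K : ℕ) : Subgroup G :=
  Subgroup.closure {g | ∃ w ∈ X^K, g = w * b * w⁻¹}

section AclSec
variable (h1 : (1:G) ∈ X) (hinv : X⁻¹ = X)
variable (hyp : ∀ x ∈ X ^ (1000:ℕ), ∀ y ∈ X ^ (1000:ℕ), ⁅⁅x, y⁆, y⁆ = 1)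

include h1 in
lemma memA_cj {b w : G} {m K : ℕ} (hw : w ∈ X^m) (hm : m ≤ K) :
    w * b * w⁻¹ ∈ Acl X b K :=
  Subgroup.subset_closure ⟨w, xpow_monoT h1 hm hw, rfl⟩

include h1 in
lemma memA_b (b : G) (K : ℕ) : b ∈ Acl X b K := by
  have h := memA_cj (b := b) (h1 := h1) (one_mem_powT h1 K) (le_refl K)
  simpa using h

include h1 in
lemma A_mono {b : G} {K K' : ℕ} (h : K ≤ K') {u : G} (hu : u ∈ Acl X b K) :
    u ∈ Acl X b K' := by
  refine Subgroup.closure_mono ?_ hu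
  rintro g ⟨w, hw, rfl⟩
  exact ⟨w, xpow_monoT h1 h hw, rfl⟩

include h1 in
lemma memA_conj {b u w : G} {k m K : ℕ} (hu : u ∈ Acl X b k) (hw : w ∈ X^m)
    (hkm : k + m ≤ K) : w * u * w⁻¹ ∈ Acl X b K := by
  induction hu using Subgroup.closure_induction with
  | mem g hg =>
      obtain ⟨v, hv, rfl⟩ := hg
      have e : w * (v * b * v⁻¹) * w⁻¹ = (w*v) * b * (w*v)⁻¹ := by group
      rw [e]
      exact memA_cj h1 (mul_mem_powT hw hv) (by omega)
  | one => simpa using Subgroup.one_mem _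
  | mul a c _ _ ha hc =>
      have e : w * (a*c) * w⁻¹ = (w*a*w⁻¹) * (w*c*w⁻¹) := by group
      rw [e]; exact Subgroup.mul_mem _ ha hc
  | inv a _ ha =>
      have e : w * a⁻¹ * w⁻¹ = (w*a*w⁻¹)⁻¹ := by group
      rw [e]; exact Subgroup.inv_mem _ ha

include h1 in
lemma memA_comm1 {b w : G} {m K : ℕ} (hw : w ∈ X^m) (hm : m ≤ K) :
    ⁅w, b⁆ ∈ Acl X b K := by
  rw [pg6]
  exact Subgroup.mul_mem _ (memA_cj h1 hw hm) (Subgroup.inv_mem _ (memA_b h1 b K))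

include h1 in
lemma memA_comm1' {b w : G} {m K : ℕ} (hw : w ∈ X^m) (hm : m ≤ K) :
    ⁅b, w⁆ ∈ Acl X b K := by
  rw [← commutatorElement_inv]
  exact Subgroup.inv_mem _ (memA_comm1 h1 hw hm)

include h1 in
lemma memA_comm2 {b u w : G} {k m K : ℕ} (hu : u ∈ Acl X b k) (hw : w ∈ X^m)
    (hkm : k + m ≤ K) : ⁅u, w⁆ ∈ Acl X b K := by
  have e : ⁅u,w⁆ = u * (w*u⁻¹*w⁻¹) := by simp only [commutatorElement_def]; group
  rw [e]
  exact Subgroup.mul_mem _ (A_mono h1 (by omega) hu)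
    (memA_conj h1 (Subgroup.inv_mem _ hu) hw hkm)

include h1 hinv hyp in
lemma A_comm {b : G} {s K : ℕ} (hb : b ∈ X^s) (hs : s ≤ 1000) (hK : 2*K ≤ 1000) :
    ∀ u ∈ Acl X b K, ∀ v ∈ Acl X b K, Commute u v := by
  have gen : ∀ g1 ∈ {g | ∃ w ∈ X^K, g = w * b * w⁻¹},
      ∀ g2 ∈ {g | ∃ w ∈ X^K, g = w * b * w⁻¹}, Commute g1 g2 := by
    rintro _ ⟨u, hu, rfl⟩ _ ⟨w, hw, rfl⟩
    have hc : Commute ((w⁻¹*u)*b*(w⁻¹*u)⁻¹) b :=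
      HypC h1 hyp (mul_mem_powT (inv_mem_powT hinv hw) hu) hb (by omega) hs
    have h := hc.eq
    calc (u*b*u⁻¹) * (w*b*w⁻¹)
        = w * (((w⁻¹*u)*b*(w⁻¹*u)⁻¹) * b) * w⁻¹ := by group
      _ = w * (b * ((w⁻¹*u)*b*(w⁻¹*u)⁻¹)) * w⁻¹ := by rw [h]
      _ = (w*b*w⁻¹) * (u*b*u⁻¹) := by group
  intro u hu v hv
  induction hu using Subgroup.closure_induction with
  | mem g hg =>
      induction hv using Subgroup.closure_induction with
      | mem g' hg' => exact gen g hg g' hg'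
      | one => exact Commute.one_right _
      | mul a c _ _ ha hc => exact Commute.mul_right ha hc
      | inv a _ ha => exact Commute.inv_right ha
  | one => exact Commute.one_left _
  | mul a c _ _ ha hc => exact Commute.mul_left ha hc
  | inv a _ ha => exact Commute.inv_left ha

end AclSec

section Local
variable (h1 : (1:G) ∈ X) (hinv : X⁻¹ = X)
variable (hyp : ∀ x ∈ X ^ (1000:ℕ), ∀ y ∈ X ^ (1000:ℕ), ⁅⁅x, y⁆, y⁆ = 1)

include h1 hinv hyp in
/-- local antisymmetry in the last two arguments -/
lemma E1 {p q r : ℕ} {x y z : G} (hx : x ∈ X^p) (hy : y ∈ X^q) (hz : z ∈ X^r)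
    (hb : p + q + r ≤ 60) :
    ⁅⁅x,y⁆,z⁆ * ⁅⁅x,z⁆,y⁆ = 1 := by
  have hx' : x ∈ X^1000 := xpow_monoT h1 (by omega) hx
  have hy' : y ∈ X^1000 := xpow_monoT h1 (by omega) hy
  have hz' : z ∈ X^1000 := xpow_monoT h1 (by omega) hz
  have hyz' : y*z ∈ X^1000 := xpow_monoT h1 (by omega) (mul_mem_powT hy hz)
  have h0 : ⁅⁅x, y*z⁆, y*z⁆ = 1 := hyp _ hx' _ hyz'
  have hAy : ⁅⁅x,y⁆,y⁆ = 1 := hyp _ hx' _ hy'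
  have hVz : ⁅⁅x,z⁆,z⁆ = 1 := hyp _ hx' _ hz'
  have hraw : ⁅⁅x, y*z⁆, y*z⁆ =
      (⁅x,y⁆ * (y * (⁅⁅x,z⁆,z⁆ * (z * ⁅⁅x,z⁆,y⁆ * z⁻¹)) * y⁻¹) * ⁅x,y⁆⁻¹) *
        (⁅⁅x,y⁆,y⁆ * (y * ⁅⁅x,y⁆,z⁆ * y⁻¹)) := by
    simp only [commutatorElement_def]; group
  rw [h0, hAy, hVz, one_mul, one_mul] at hraw
  -- hraw : 1 = P * (y * D * y⁻¹)
  have hQ : (⁅x,y⁆ * (y * (z * ⁅⁅x,z⁆,y⁆ * z⁻¹) * y⁻¹) * ⁅x,y⁆⁻¹)⁻¹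
      = y * ⁅⁅x,y⁆,z⁆ * y⁻¹ := inv_eq_of_mul_eq_one_right hraw.symm
  have hD : ⁅⁅x,y⁆,z⁆ =
      (y⁻¹ * ⁅x,y⁆ * y) * (z * ⁅⁅x,z⁆,y⁆⁻¹ * z⁻¹) * (y⁻¹ * ⁅x,y⁆ * y)⁻¹ := by
    have h2 : ⁅⁅x,y⁆,z⁆ =
        y⁻¹ * (⁅x,y⁆ * (y * (z * ⁅⁅x,z⁆,y⁆ * z⁻¹) * y⁻¹) * ⁅x,y⁆⁻¹)⁻¹ * y := by
      rw [hQ]; group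
    rw [h2]; group
  have cAy : Commute ⁅x,y⁆ y := by
    have hc : Commute (x*y*x⁻¹) y := HypC h1 hyp hx hy (by omega) (by omega)
    rw [pg6 x y]
    exact hc.mul_left ((Commute.refl y).inv_left)
  have czE : Commute z ⁅⁅x,z⁆,y⁆ := by
    have hzA : z ∈ Acl X z 300 := memA_b h1 z 300
    have hEA : ⁅⁅x,z⁆,y⁆ ∈ Acl X z 300 :=
      memA_comm2 h1 (memA_comm1 h1 (K := 200) hx (by omega)) hy (by omega)
    exact A_comm h1 hinv hyp hz (by omega) (by omega) _ hzA _ hEA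
  have cAE : Commute ⁅x,y⁆ ⁅⁅x,z⁆,y⁆ := by
    have h1m : ⁅x,y⁆ ∈ Acl X x 300 := memA_comm1' h1 hy (by omega)
    have h2m : ⁅⁅x,z⁆,y⁆ ∈ Acl X x 300 :=
      memA_comm2 h1 (memA_comm1' h1 (K := 200) hz (by omega)) hy (by omega)
    exact A_comm h1 hinv hyp hx (by omega) (by omega) _ h1m _ h2m
  have key : ⁅⁅x,y⁆,z⁆ = ⁅⁅x,z⁆,y⁆⁻¹ := by
    rw [hD, conj_eq' cAy.symm, conj_eq czE.inv_right, conj_eq cAE.inv_right]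
  rw [key, inv_mul_cancel]

include h1 hinv hyp in
/-- conjugation invariance in the middle argument -/
lemma MID {p q s r : ℕ} {x y z t : G} (hx : x ∈ X^p) (hy : y ∈ X^q) (hz : z ∈ X^s)
    (ht : t ∈ X^r) (hb : p + q + 2*s + r ≤ 60) :
    ⁅⁅x,y⁆,t⁆ = ⁅⁅x, z⁻¹*y*z⁆, t⁆ := by
  have hy' : z⁻¹*y*z ∈ X^(s+q+s) :=
    mul_mem_powT (mul_mem_powT (inv_mem_powT hinv hz) hy) hz
  have e1a := E1 h1 hinv hyp hx hy (mul_mem_powT hz ht) (by omega)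
  have h2a : ⁅⁅x,y⁆,z*t⁆ = ⁅⁅x,z*t⁆,y⁆⁻¹ := eq_inv_of_mul_eq_one_left e1a
  have e1b := E1 h1 hinv hyp hx hy' ht (by omega)
  have hM : ⁅⁅x,t⁆, z⁻¹*y*z⁆ = ⁅⁅x, z⁻¹*y*z⁆, t⁆⁻¹ := eq_inv_of_mul_eq_one_right e1b
  have e1c := E1 h1 hinv hyp hx hy hz (by omega)
  have hVy : ⁅⁅x,z⁆,y⁆ = ⁅⁅x,y⁆,z⁆⁻¹ := eq_inv_of_mul_eq_one_right e1c
  have hL : ⁅⁅x,y⁆, z*t⁆ = ⁅⁅x,y⁆,z⁆ * (z * ⁅⁅x,y⁆,t⁆ * z⁻¹) := pg1 _ z t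
  have hR : ⁅⁅x, z*t⁆, y⁆ =
      (⁅x,z⁆ * (z * ⁅⁅x,t⁆, z⁻¹*y*z⁆ * z⁻¹) * ⁅x,z⁆⁻¹) * ⁅⁅x,z⁆,y⁆ := by
    simp only [commutatorElement_def]; group
  have comb : ⁅⁅x,y⁆,z⁆ * (z * ⁅⁅x,y⁆,t⁆ * z⁻¹)
      = ((⁅x,z⁆ * (z * ⁅⁅x, z⁻¹*y*z⁆, t⁆⁻¹ * z⁻¹) * ⁅x,z⁆⁻¹) * ⁅⁅x,y⁆,z⁆⁻¹)⁻¹ := by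
    rw [← hL, h2a, hR, hM, hVy]
  have h3 : ⁅⁅x,y⁆,z⁆ * (z * ⁅⁅x,y⁆,t⁆ * z⁻¹)
      = ⁅⁅x,y⁆,z⁆ * (⁅x,z⁆ * (z * ⁅⁅x, z⁻¹*y*z⁆, t⁆ * z⁻¹) * ⁅x,z⁆⁻¹) := by
    rw [comb]; group
  have comb2 := mul_left_cancel h3
  have cVz : Commute ⁅x,z⁆ z := by
    have hc : Commute (x*z*x⁻¹) z := HypC h1 hyp hx hz (by omega) (by omega)
    rw [pg6 x z]; exact hc.mul_left ((Commute.refl z).inv_left)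
  have cVD : Commute ⁅x,z⁆ ⁅⁅x, z⁻¹*y*z⁆, t⁆ := by
    have m1 : ⁅x,z⁆ ∈ Acl X x 300 := memA_comm1' h1 hz (by omega)
    have m2 : ⁅⁅x, z⁻¹*y*z⁆, t⁆ ∈ Acl X x 300 :=
      memA_comm2 h1 (memA_comm1' h1 (K := 200) hy' (by omega)) ht (by omega)
    exact A_comm h1 hinv hyp hx (by omega) (by omega) _ m1 _ m2
  have final : ⁅⁅x,y⁆,t⁆
      = (z⁻¹*⁅x,z⁆*z) * ⁅⁅x, z⁻¹*y*z⁆, t⁆ * (z⁻¹*⁅x,z⁆*z)⁻¹ := by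
    have h4 : ⁅⁅x,y⁆,t⁆
        = z⁻¹ * (⁅x,z⁆ * (z * ⁅⁅x, z⁻¹*y*z⁆, t⁆ * z⁻¹) * ⁅x,z⁆⁻¹) * z := by
      rw [← comb2]; group
    rw [h4]; group
  rw [final, conj_eq' cVz.symm, conj_eq cVD]

include h1 hinv hyp in
/-- swapping the two inner arguments inverts -/
lemma SWAP {p q r : ℕ} {x y t : G} (hx : x ∈ X^p) (hy : y ∈ X^q) (ht : t ∈ X^r)
    (hb : p + q + r ≤ 60) :
    ⁅⁅x,y⁆,t⁆ = ⁅⁅y,x⁆,t⁆⁻¹ := by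
  have e0 : ⁅x,y⁆ = ⁅y,x⁆⁻¹ := (commutatorElement_inv y x).symm
  have e1 : ⁅⁅y,x⁆⁻¹, t⁆ = ⁅y,x⁆⁻¹ * ⁅⁅y,x⁆,t⁆⁻¹ * ⁅y,x⁆ := pg4 _ _
  have cu : Commute ⁅y,x⁆ ⁅⁅y,x⁆,t⁆ := by
    have m1 : ⁅y,x⁆ ∈ Acl X x 300 := memA_comm1 h1 hy (by omega)
    have m2 : ⁅⁅y,x⁆,t⁆ ∈ Acl X x 300 :=
      memA_comm2 h1 (memA_comm1 h1 (K := 200) hy (by omega)) ht (by omega)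
    exact A_comm h1 hinv hyp hx (by omega) (by omega) _ m1 _ m2
  rw [e0, e1, conj_eq' cu.inv_right]

include h1 hinv hyp in
/-- conjugation invariance in the first argument -/
lemma FIRSTINV {p q s r : ℕ} {x y z t : G} (hx : x ∈ X^p) (hy : y ∈ X^q) (hz : z ∈ X^s)
    (ht : t ∈ X^r) (hb : p + q + 2*s + r ≤ 50) :
    ⁅⁅z⁻¹*x*z, y⁆, t⁆ = ⁅⁅x,y⁆,t⁆ := by
  have hx' : z⁻¹*x*z ∈ X^(s+p+s) :=
    mul_mem_powT (mul_mem_powT (inv_mem_powT hinv hz) hx) hz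
  rw [SWAP h1 hinv hyp hx' hy ht (by omega)]
  rw [← MID h1 hinv hyp hy hx hz ht (by omega)]
  rw [← SWAP h1 hinv hyp hx hy ht (by omega)]

include h1 hinv hyp in
/-- conjugation invariance in the last argument -/
lemma THIRDINV {p q s r : ℕ} {x y z t : G} (hx : x ∈ X^p) (hy : y ∈ X^q) (hz : z ∈ X^s)
    (ht : t ∈ X^r) (hb : p + q + 2*s + r ≤ 50) :
    ⁅⁅x,y⁆, z⁻¹*t*z⁆ = ⁅⁅x,y⁆,t⁆ := by
  have ht' : z⁻¹*t*z ∈ X^(s+r+s) :=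
    mul_mem_powT (mul_mem_powT (inv_mem_powT hinv hz) ht) hz
  have e1 := E1 h1 hinv hyp hx hy ht' (by omega)
  have h2 : ⁅⁅x,y⁆, z⁻¹*t*z⁆ = ⁅⁅x, z⁻¹*t*z⁆, y⁆⁻¹ := eq_inv_of_mul_eq_one_left e1
  rw [h2, ← MID h1 hinv hyp hx ht hz hy (by omega)]
  have e2 := E1 h1 hinv hyp hx hy ht (by omega)
  have h3 : ⁅⁅x,t⁆,y⁆ = ⁅⁅x,y⁆,t⁆⁻¹ := eq_inv_of_mul_eq_one_right e2
  rw [h3, inv_inv]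

include h1 hinv hyp in
/-- the commutator of three generators is centralized by each generator -/
lemma E2 {x y z t : G} (hx : x ∈ X) (hy : y ∈ X) (hz : z ∈ X) (ht : t ∈ X) :
    Commute ⁅⁅x,y⁆,z⁆ t := by
  have hx1 : x ∈ X^1 := by rwa [pow_one]
  have hy1 : y ∈ X^1 := by rwa [pow_one]
  have hz1 : z ∈ X^1 := by rwa [pow_one]
  have ht1 : t ∈ X^1 := by rwa [pow_one]
  have ht1' : t⁻¹ ∈ X^1 := inv_mem_powT hinv ht1
  have hxc : t*x*t⁻¹ ∈ X^3 := by
    have := mul_mem_powT (mul_mem_powT ht1 hx1) ht1'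
    simpa using this
  have hyc : t*y*t⁻¹ ∈ X^3 := by
    have := mul_mem_powT (mul_mem_powT ht1 hy1) ht1'
    simpa using this
  have hzc : t*z*t⁻¹ ∈ X^3 := by
    have := mul_mem_powT (mul_mem_powT ht1 hz1) ht1'
    simpa using this
  have e0 : t * ⁅⁅x,y⁆,z⁆ * t⁻¹ = ⁅⁅t*x*t⁻¹, t*y*t⁻¹⁆, t*z*t⁻¹⁆ := by
    simp only [commutatorElement_def]; group
  have e1 : ⁅⁅t*x*t⁻¹, t*y*t⁻¹⁆, t*z*t⁻¹⁆ = ⁅⁅x, t*y*t⁻¹⁆, t*z*t⁻¹⁆ := by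
    have h := FIRSTINV h1 hinv hyp hx1 hyc ht1' hzc (by omega)
    simpa using h
  have e2 : ⁅⁅x, t*y*t⁻¹⁆, t*z*t⁻¹⁆ = ⁅⁅x,y⁆, t*z*t⁻¹⁆ := by
    have h := MID h1 hinv hyp hx1 hy1 ht1' hzc (by omega)
    simp only [inv_inv] at h
    exact h.symm
  have e3 : ⁅⁅x,y⁆, t*z*t⁻¹⁆ = ⁅⁅x,y⁆,z⁆ := by
    have h := THIRDINV h1 hinv hyp hx1 hy1 ht1' hz1 (by omega)
    simpa using h
  have : t * ⁅⁅x,y⁆,z⁆ * t⁻¹ = ⁅⁅x,y⁆,z⁆ := by rw [e0, e1, e2, e3]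
  have h5 : t * ⁅⁅x,y⁆,z⁆ = ⁅⁅x,y⁆,z⁆ * t := by
    calc t * ⁅⁅x,y⁆,z⁆ = (t * ⁅⁅x,y⁆,z⁆ * t⁻¹) * t := by group
      _ = ⁅⁅x,y⁆,z⁆ * t := by rw [this]
  exact h5.symm

end Local

/-! ### global part -/

section Global
variable {G : Type} [Group G]

lemma commute_of_center {c : G} (hc : c ∈ Subgroup.center G) (a : G) : Commute a c :=
  (Subgroup.mem_center_iff.mp hc a :)

lemma center_conj_eq {c : G} (hc : c ∈ Subgroup.center G) (a : G) : a * c * a⁻¹ = c :=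
  conj_eq (commute_of_center hc a)

/-- {k | ⁅u,k⁆ ∈ N} as a subgroup, for N conjugation-stable -/
def cclL (u : G) (N : Subgroup G) (hconj : ∀ a g, g ∈ N → a*g*a⁻¹ ∈ N) : Subgroup G where
  carrier := {k | ⁅u,k⁆ ∈ N}
  one_mem' := by
    show ⁅u, (1:G)⁆ ∈ N
    rw [commutatorElement_one_right]; exact N.one_mem
  mul_mem' := by
    intro a b ha hb
    show ⁅u, a*b⁆ ∈ N
    rw [pg1]
    exact N.mul_mem ha (hconj a _ hb)
  inv_mem' := by
    intro a ha
    show ⁅u, a⁻¹⁆ ∈ N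
    rw [pg5]
    have h := hconj a⁻¹ _ (N.inv_mem ha)
    simpa using h

/-- {g | ∀ h, ⁅g,h⁆ ∈ N} as a subgroup, for N conjugation-stable -/
def cclA (N : Subgroup G) (hconj : ∀ a g, g ∈ N → a*g*a⁻¹ ∈ N) : Subgroup G where
  carrier := {g | ∀ h, ⁅g,h⁆ ∈ N}
  one_mem' := by
    intro h
    rw [commutatorElement_one_left]; exact N.one_mem
  mul_mem' := by
    intro a b ha hb h
    show ⁅a*b, h⁆ ∈ N
    rw [pg2]
    exact N.mul_mem (hconj a _ (hb h)) (ha h)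
  inv_mem' := by
    intro a ha h
    show ⁅a⁻¹, h⁆ ∈ N
    rw [pg4]
    have h2 := hconj a⁻¹ _ (N.inv_mem (ha h))
    simpa using h2

lemma center_conj_stable : ∀ a g : G, g ∈ Subgroup.center G → a*g*a⁻¹ ∈ Subgroup.center G := by
  intro a g hg
  rwa [center_conj_eq hg a]

/-- the subgroup Z2 = {g | ∀ k, ⁅g,k⁆ central} -/
def Z2 (G : Type) [Group G] : Subgroup G := cclA (Subgroup.center G) center_conj_stable

lemma Z2_conj_stable : ∀ a g : G, g ∈ Z2 G → a*g*a⁻¹ ∈ Z2 G := by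
  intro a g hg k
  show ⁅a*g*a⁻¹, k⁆ ∈ Subgroup.center G
  have e : ⁅a*g*a⁻¹, k⁆ = a * ⁅g, a⁻¹*k*a⁆ * a⁻¹ := by
    simp only [commutatorElement_def]; group
  rw [e]
  exact center_conj_stable a _ (hg (a⁻¹*k*a))

variable {X : Set G}

lemma all_mem (hgen : Subgroup.closure X = ⊤) (H : Subgroup G) (hX : X ⊆ H) (g : G) :
    g ∈ H := by
  have h : Subgroup.closure X ≤ H := (Subgroup.closure_le H).mpr hX
  rw [hgen] at h
  exact h (Subgroup.mem_top g)

variable (h1 : (1:G) ∈ X) (hinv : X⁻¹ = X)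
variable (hyp : ∀ x ∈ X ^ (1000:ℕ), ∀ y ∈ X ^ (1000:ℕ), ⁅⁅x, y⁆, y⁆ = 1)
variable (hgen : Subgroup.closure X = ⊤)

include h1 hinv hyp hgen in
/-- γ₃ is central -/
lemma Z3 : ∀ g h k : G, ⁅⁅g,h⁆,k⁆ ∈ Subgroup.center G := by
  -- step A: for generators
  have stepA : ∀ x ∈ X, ∀ y ∈ X, ∀ z ∈ X, ⁅⁅x,y⁆,z⁆ ∈ Subgroup.center G := by
    intro x hx y hy z hz
    rw [Subgroup.mem_center_iff]
    intro g
    have hcen : g ∈ Subgroup.centralizer {⁅⁅x,y⁆,z⁆} := by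
      refine all_mem hgen _ ?_ g
      intro t ht
      exact Subgroup.mem_centralizer_singleton_iff.mpr (E2 h1 hinv hyp hx hy hz ht).symm.eq
    exact (Subgroup.mem_centralizer_singleton_iff.mp hcen)
  -- step B: free third entry
  have stepB : ∀ x ∈ X, ∀ y ∈ X, ∀ k : G, ⁅⁅x,y⁆,k⁆ ∈ Subgroup.center G := by
    intro x hx y hy k
    have := all_mem hgen (cclL ⁅x,y⁆ (Subgroup.center G) center_conj_stable)
      (fun z hz => stepA x hx y hy z hz) k
    exact this
  -- step C: generators are in the "g : ∀h, ⁅g,h⁆ ∈ Z2" subgroup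
  have stepC : ∀ x ∈ X, ∀ h : G, ⁅x,h⁆ ∈ Z2 G := by
    intro x hx h
    have hXsub : ∀ y ∈ X, ⁅x,y⁆ ∈ Z2 G := by
      intro y hy k
      exact stepB x hx y hy k
    exact all_mem hgen (cclL x (Z2 G) Z2_conj_stable) hXsub h
  intro g h k
  have hall : ∀ g : G, ∀ h : G, ⁅g,h⁆ ∈ Z2 G := by
    intro g
    exact all_mem hgen (cclA (Z2 G) Z2_conj_stable) stepC g
  exact hall g h k

end Global

/-! ### trilinear calculus given central γ₃ -/

section Tri
variable {G : Type} [Group G]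
variable (Z3h : ∀ g h k : G, ⁅⁅g,h⁆,k⁆ ∈ Subgroup.center G)

lemma absorb {c : G} (hc : c ∈ Subgroup.center G) (a k : G) : ⁅a*c, k⁆ = ⁅a,k⁆ := by
  calc ⁅a*c,k⁆ = a*(c*k*c⁻¹)*a⁻¹*k⁻¹ := by simp only [commutatorElement_def]; group
    _ = a*k*a⁻¹*k⁻¹ := by rw [conj_eq ((commute_of_center hc k).symm)]
    _ = ⁅a,k⁆ := (commutatorElement_def a k).symm

include Z3h in
lemma l_k_mul (g h k k' : G) : ⁅⁅g,h⁆, k*k'⁆ = ⁅⁅g,h⁆,k⁆ * ⁅⁅g,h⁆,k'⁆ := by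
  rw [pg1 ⁅g,h⁆ k k', conj_eq (commute_of_center (Z3h g h k') k)]

include Z3h in
lemma l_k_inv (g h k : G) : ⁅⁅g,h⁆, k⁻¹⁆ = ⁅⁅g,h⁆,k⁆⁻¹ := by
  rw [pg5, conj_eq' (commute_of_center (Subgroup.inv_mem _ (Z3h g h k)) k)]

include Z3h in
lemma l_h_mul (g h h' k : G) : ⁅⁅g,h*h'⁆,k⁆ = ⁅⁅g,h⁆,k⁆ * ⁅⁅g,h'⁆,k⁆ := by
  have hc : ⁅⁅g,h'⁆⁻¹,h⁆ ∈ Subgroup.center G := by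
    rw [commutatorElement_inv]; exact Z3h h' g h
  have e1 : ⁅g,h*h'⁆ = (⁅g,h⁆ * ⁅g,h'⁆) * ⁅⁅g,h'⁆⁻¹,h⁆ := by
    simp only [commutatorElement_def]; group
  rw [e1, absorb hc, pg2, conj_eq (commute_of_center (Z3h g h' k) ⁅g,h⁆)]
  exact ((commute_of_center (Z3h g h' k) ⁅⁅g,h⁆,k⁆).eq).symm

include Z3h in
lemma l_h_inv (g h k : G) : ⁅⁅g,h⁻¹⁆,k⁆ = ⁅⁅g,h⁆,k⁆⁻¹ := by
  have hc : ⁅⁅g,h⁆,h⁻¹⁆ ∈ Subgroup.center G := Z3h g h h⁻¹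
  have e1 : ⁅g,h⁻¹⁆ = ⁅g,h⁆⁻¹ * ⁅⁅g,h⁆,h⁻¹⁆ := by
    simp only [commutatorElement_def]; group
  rw [e1, absorb hc, pg4, conj_eq' (commute_of_center (Subgroup.inv_mem _ (Z3h g h k)) ⁅g,h⁆)]

include Z3h in
lemma l_g_mul (g g' h k : G) : ⁅⁅g*g',h⁆,k⁆ = ⁅⁅g,h⁆,k⁆ * ⁅⁅g',h⁆,k⁆ := by
  have hc : ⁅⁅g',h⁆⁻¹, g⁆ ∈ Subgroup.center G := by
    rw [commutatorElement_inv]; exact Z3h h g' g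
  have e1 : ⁅g*g',h⁆ = (⁅g',h⁆ * ⁅g,h⁆) * (⁅g,h⁆⁻¹ * ⁅⁅g',h⁆⁻¹,g⁆ * ⁅g,h⁆) := by
    simp only [commutatorElement_def]; group
  rw [conj_eq' (commute_of_center hc ⁅g,h⁆)] at e1
  rw [e1, absorb hc, pg2, conj_eq (commute_of_center (Z3h g h k) ⁅g',h⁆)]

include Z3h in
lemma l_g_inv (g h k : G) : ⁅⁅g⁻¹,h⁆,k⁆ = ⁅⁅g,h⁆,k⁆⁻¹ := by
  have hc : ⁅⁅g,h⁆, g⁻¹⁆ ∈ Subgroup.center G := Z3h g h g⁻¹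
  have e1 : ⁅g⁻¹,h⁆ = ⁅g,h⁆⁻¹ * ⁅⁅g,h⁆,g⁻¹⁆ := by
    simp only [commutatorElement_def]; group
  rw [e1, absorb hc, pg4, conj_eq' (commute_of_center (Subgroup.inv_mem _ (Z3h g h k)) ⁅g,h⁆)]

lemma central_rearrange {a1 a2 b1 b2 : G} (h : Commute a2 b1) :
    (a1*a2)*(b1*b2) = (a1*b1)*(a2*b2) := by
  rw [mul_assoc, ← mul_assoc a2, h.eq, mul_assoc, ← mul_assoc, ← mul_assoc]

end Tri

section Conclusion
variable {G : Type} [Group G] {X : Set G}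
variable (h1 : (1:G) ∈ X) (hinv : X⁻¹ = X)
variable (hyp : ∀ x ∈ X ^ (1000:ℕ), ∀ y ∈ X ^ (1000:ℕ), ⁅⁅x, y⁆, y⁆ = 1)
variable (hgen : Subgroup.closure X = ⊤)

include h1 hinv hyp hgen in
lemma main_engel : ∀ g h : G, ⁅⁅g,h⁆,h⁆ = 1 := by
  have Z3h := Z3 h1 hinv hyp hgen
  have hall : ∀ g : G, g ∈ Subgroup.closure X := by
    intro g; rw [hgen]; exact Subgroup.mem_top g
  have A2 : ∀ x ∈ X, ∀ y ∈ X, ∀ k : G, ⁅⁅x,y⁆,k⁆ * ⁅⁅x,k⁆,y⁆ = 1 := by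
    intro x hx y hy k
    have hx1 : x ∈ X^1 := by rwa [pow_one]
    have hy1 : y ∈ X^1 := by rwa [pow_one]
    induction hall k using Subgroup.closure_induction with
    | mem u hu =>
        have hu1 : u ∈ X^1 := by rwa [pow_one]
        exact E1 h1 hinv hyp hx1 hy1 hu1 (by omega)
    | one => simp
    | mul u v hu hv pu pv =>
        rw [l_k_mul Z3h, l_h_mul Z3h,
          central_rearrange (commute_of_center (Z3h x u y) ⁅⁅x,y⁆,v⁆), pu, pv, one_mul]
    | inv u hu pu =>
        rw [l_k_inv Z3h, l_h_inv Z3h, ← mul_inv_rev,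
          ← (commute_of_center (Z3h x u y) ⁅⁅x,y⁆,u⁆).eq, pu, inv_one]
  have A3 : ∀ x ∈ X, ∀ h : G, ∀ k : G, ⁅⁅x,h⁆,k⁆ * ⁅⁅x,k⁆,h⁆ = 1 := by
    intro x hx h
    induction hall h using Subgroup.closure_induction with
    | mem u hu => exact fun k => A2 x hx u hu k
    | one => intro k; simp
    | mul u v hu hv pu pv =>
        intro k
        rw [l_h_mul Z3h, l_k_mul Z3h,
          central_rearrange (commute_of_center (Z3h x k u) ⁅⁅x,v⁆,k⁆), pu k, pv k, one_mul]
    | inv u hu pu =>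
        intro k
        rw [l_h_inv Z3h, l_k_inv Z3h, ← mul_inv_rev,
          ← (commute_of_center (Z3h x k u) ⁅⁅x,u⁆,k⁆).eq, pu k, inv_one]
  have A4 : ∀ g h k : G, ⁅⁅g,h⁆,k⁆ * ⁅⁅g,k⁆,h⁆ = 1 := by
    intro g
    induction hall g using Subgroup.closure_induction with
    | mem x hx => exact fun h k => A3 x hx h k
    | one => intro h k; simp
    | mul u v hu hv pu pv =>
        intro h k
        rw [l_g_mul Z3h, l_g_mul Z3h,
          central_rearrange (commute_of_center (Z3h u k h) ⁅⁅v,h⁆,k⁆), pu h k, pv h k, one_mul]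
    | inv u hu pu =>
        intro h k
        rw [l_g_inv Z3h, l_g_inv Z3h, ← mul_inv_rev,
          ← (commute_of_center (Z3h u k h) ⁅⁅u,h⁆,k⁆).eq, pu h k, inv_one]
  have D1 : ∀ y ∈ X, ∀ g : G, ⁅⁅g,y⁆,y⁆ = 1 := by
    intro y hy g
    have hy1 : y ∈ X^1 := by rwa [pow_one]
    induction hall g using Subgroup.closure_induction with
    | mem x hx =>
        have hx1 : x ∈ X^1 := by rwa [pow_one]
        exact hyp x (xpow_monoT h1 (by omega) hx1) y (xpow_monoT h1 (by omega) hy1)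
    | one => simp
    | mul u v hu hv pu pv => rw [l_g_mul Z3h, pu, pv, one_mul]
    | inv u hu pu => rw [l_g_inv Z3h, pu, inv_one]
  intro g h
  induction hall h using Subgroup.closure_induction with
  | mem y hy => exact D1 y hy g
  | one => simp
  | mul u v hu pv pu' pv' =>
      rw [l_h_mul Z3h, l_k_mul Z3h, l_k_mul Z3h, pu', pv', one_mul, mul_one]
      exact A4 g u v
  | inv u hu pu => rw [l_h_inv Z3h, l_k_inv Z3h, inv_inv]; exact pu

end Conclusion

end Engel2

theorem stmt_11 :
    ∃ ℓ : ℕ, 0 < ℓ ∧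
      ∀ (G : Type) (_ : Group G) (X : Set G),
        (1 : G) ∈ X → X⁻¹ = X →
        (∀ x ∈ X ^ ℓ, ∀ y ∈ X ^ ℓ, ⁅⁅x, y⁆, y⁆ = 1) →
        Subgroup.closure X = ⊤ →
        ∀ g h : G, ⁅⁅g, h⁆, h⁆ = 1 := by
  refine ⟨1000, by norm_num, ?_⟩
  intro G _ X h1 hinv hyp hgen g h
  exact Engel2.main_engel h1 hinv hyp hgen g h
end

section
/- Let G be a nilpotent group of class at most 3 generated by a symmetric set X = X⁻¹ containing 1, and suppose [x,y,z][x,z,y] = 1 and [x,y,y] = 1 for all x, y, z ∈ X. Then G is 2-Engel, i.e., [g,h,h] = 1 for all g, h ∈ G. -/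
open Pointwise
open scoped commutatorElement

theorem stmt_12 {G : Type*} [Group G] (X : Set G)
    (h1 : (1 : G) ∈ X) (hsym : X⁻¹ = X)
    (hgen : Subgroup.closure X = ⊤)
    (hnil : lowerCentralSeries (⊤ : Subgroup G) 3 = ⊥)
    (hswap : ∀ x ∈ X, ∀ y ∈ X, ∀ z ∈ X, ⁅⁅x, y⁆, z⁆ * ⁅⁅x, z⁆, y⁆ = 1)
    (hengel : ∀ x ∈ X, ∀ y ∈ X, ⁅⁅x, y⁆, y⁆ = 1) :
    ∀ g h : G, ⁅⁅g, h⁆, h⁆ = 1 := by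
  -- step lemma for lower central series
  have step : ∀ n : ℕ, ∀ p : G, p ∈ lowerCentralSeries (⊤ : Subgroup G) n → ∀ q : G,
      ⁅p, q⁆ ∈ lowerCentralSeries (⊤ : Subgroup G) (n + 1) := by
    intro n p hp q
    show ⁅p, q⁆ ∈ ⁅Subgroup.lowerCentralSeries (⊤ : Subgroup G) n, ⊤⁆
    exact Subgroup.commutator_mem_commutator hp (Subgroup.mem_top q)
  -- triple commutators are central
  have cen : ∀ a b c g : G, Commute ⁅⁅a, b⁆, c⁆ g := by
    intro a b c g
    rw [← commutatorElement_eq_one_iff_commute]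
    have h0 : ⁅a, b⁆ ∈ lowerCentralSeries (⊤ : Subgroup G) 1 :=
      step 0 a (Subgroup.mem_top a) b
    have h2 : ⁅⁅a, b⁆, c⁆ ∈ lowerCentralSeries (⊤ : Subgroup G) 2 := step 1 _ h0 c
    have h3 : ⁅⁅⁅a, b⁆, c⁆, g⁆ ∈ lowerCentralSeries (⊤ : Subgroup G) 3 := step 2 _ h2 g
    rw [hnil] at h3
    exact h3
  -- conjugation by anything fixes triple commutators
  have cenconj : ∀ a b c u : G, u * ⁅⁅a, b⁆, c⁆ * u⁻¹ = ⁅⁅a, b⁆, c⁆ := by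
    intro a b c u
    rw [(cen a b c u).symm.eq, mul_inv_cancel_right]
  -- linearity in the third slot
  have lin3 : ∀ a b c d : G, ⁅⁅a, b⁆, c * d⁆ = ⁅⁅a, b⁆, c⁆ * ⁅⁅a, b⁆, d⁆ := by
    intro a b c d
    have e : ⁅⁅a, b⁆, c * d⁆ = ⁅⁅a, b⁆, c⁆ * (c * ⁅⁅a, b⁆, d⁆ * c⁻¹) := by
      simp only [commutatorElement_def]; group
    rw [e, cenconj]
  have lin3inv : ∀ a b c : G, ⁅⁅a, b⁆, c⁻¹⁆ = ⁅⁅a, b⁆, c⁆⁻¹ := by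
    intro a b c
    have := lin3 a b c c⁻¹
    rw [mul_inv_cancel, commutatorElement_one_right] at this
    exact (inv_eq_of_mul_eq_one_right this.symm).symm
  -- conjugation in third slot vanishes
  have conj3 : ∀ a b d u : G, ⁅⁅a, b⁆, u⁻¹ * d * u⁆ = ⁅⁅a, b⁆, d⁆ := by
    intro a b d u
    rw [lin3, lin3, lin3inv]
    rw [(cen a b d ⁅⁅a, b⁆, u⁆⁻¹).symm.eq]  -- ⁅x,u⁆⁻¹ * ⁅x,d⁆ = ⁅x,d⁆ * ⁅x,u⁆⁻¹
    rw [mul_assoc, inv_mul_cancel, mul_one]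
  -- linearity in the second slot
  have lin2 : ∀ a b c d : G, ⁅⁅a, b * c⁆, d⁆ = ⁅⁅a, b⁆, d⁆ * ⁅⁅a, c⁆, d⁆ := by
    intro a b c d
    have e : ⁅⁅a, b * c⁆, d⁆ =
        ⁅a, b⁆ * (b * ⁅⁅a, c⁆, b⁻¹ * d * b⁆ * b⁻¹) * ⁅a, b⁆⁻¹ * ⁅⁅a, b⁆, d⁆ := by
      simp only [commutatorElement_def]; group
    rw [e, conj3, cenconj a c d b]
    rw [show ⁅a, b⁆ * ⁅⁅a, c⁆, d⁆ * ⁅a, b⁆⁻¹ = ⁅a, b⁆ * ⁅⁅a, c⁆, d⁆ * ⁅a, b⁆⁻¹ * 1 from (mul_one _).symm] -- no-op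
    rw [cenconj a c d ⁅a, b⁆, mul_one, (cen a c d ⁅⁅a, b⁆, d⁆).eq]
  have lin2inv : ∀ a b d : G, ⁅⁅a, b⁻¹⁆, d⁆ = ⁅⁅a, b⁆, d⁆⁻¹ := by
    intro a b d
    have := lin2 a b b⁻¹ d
    rw [mul_inv_cancel, commutatorElement_one_right, commutatorElement_one_left] at this
    exact (inv_eq_of_mul_eq_one_right this.symm).symm
  -- linearity in the first slot
  have lin1 : ∀ a b c d : G, ⁅⁅a * b, c⁆, d⁆ = ⁅⁅a, c⁆, d⁆ * ⁅⁅b, c⁆, d⁆ := by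
    intro a b c d
    have e : ⁅⁅a * b, c⁆, d⁆ =
        (a * ⁅b, c⁆ * a⁻¹) * ⁅⁅a, c⁆, d⁆ * (a * ⁅b, c⁆ * a⁻¹)⁻¹ *
          (a * ⁅⁅b, c⁆, a⁻¹ * d * a⁆ * a⁻¹) := by
      simp only [commutatorElement_def]; group
    rw [e, conj3, cenconj a c d (a * ⁅b, c⁆ * a⁻¹), cenconj b c d a]
  have lin1inv : ∀ a c d : G, ⁅⁅a⁻¹, c⁆, d⁆ = ⁅⁅a, c⁆, d⁆⁻¹ := by
    intro a c d
    have := lin1 a a⁻¹ c d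
    rw [mul_inv_cancel, commutatorElement_one_left, commutatorElement_one_left] at this
    exact (inv_eq_of_mul_eq_one_right this.symm).symm
  have hmem : ∀ g : G, g ∈ Subgroup.closure X := by
    intro g; rw [hgen]; exact Subgroup.mem_top g
  -- extend the swap identity to all of G
  have T : ∀ g y z : G, ⁅⁅g, y⁆, z⁆ * ⁅⁅g, z⁆, y⁆ = 1 := by
    -- first extend in the z-slot, then y-slot, then g-slot
    have Tz : ∀ x ∈ X, ∀ y ∈ X, ∀ z : G, ⁅⁅x, y⁆, z⁆ * ⁅⁅x, z⁆, y⁆ = 1 := by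
      intro x hx y hy z
      induction hmem z using Subgroup.closure_induction with
      | mem w hw => exact hswap x hx y hy w hw
      | one => simp
      | mul u v hu hv pu pv =>
        rw [lin3, lin2]
        rw [(cen x y v ⁅⁅x, u⁆, y⁆).mul_mul_mul_comm]
        rw [pu, pv, mul_one]
      | inv u hu pu =>
        rw [lin3inv, lin2inv, ← mul_inv_rev, (cen x u y ⁅⁅x, y⁆, u⁆).eq, pu, inv_one]
    have Ty : ∀ x ∈ X, ∀ y z : G, ⁅⁅x, y⁆, z⁆ * ⁅⁅x, z⁆, y⁆ = 1 := by
      intro x hx y z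
      induction hmem y using Subgroup.closure_induction with
      | mem w hw => exact Tz x hx w hw z
      | one => simp
      | mul u v hu hv pu pv =>
        rw [lin2, lin3]
        rw [(cen x v z ⁅⁅x, z⁆, u⁆).mul_mul_mul_comm]
        rw [pu, pv, mul_one]
      | inv u hu pu =>
        rw [lin2inv, lin3inv, ← mul_inv_rev, (cen x z u ⁅⁅x, u⁆, z⁆).eq, pu, inv_one]
    intro g y z
    induction hmem g using Subgroup.closure_induction with
    | mem w hw => exact Ty w hw y z
    | one => simp
    | mul u v hu hv pu pv =>
      rw [lin1, lin1]
      rw [(cen v y z ⁅⁅u, z⁆, y⁆).mul_mul_mul_comm]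
      rw [pu, pv, mul_one]
    | inv u hu pu =>
      rw [lin1inv, lin1inv, ← mul_inv_rev, (cen u z y ⁅⁅u, y⁆, z⁆).eq, pu, inv_one]
  -- extend the Engel identity: first over g for generator h
  have E1 : ∀ h ∈ X, ∀ g : G, ⁅⁅g, h⁆, h⁆ = 1 := by
    intro h hh g
    induction hmem g using Subgroup.closure_induction with
    | mem w hw => exact hengel w hw h hh
    | one => simp
    | mul u v hu hv pu pv => rw [lin1, pu, pv, mul_one]
    | inv u hu pu => rw [lin1inv, pu, inv_one]
  intro g h
  induction hmem h using Subgroup.closure_induction with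
  | mem w hw => exact E1 w hw g
  | one => simp
  | mul u v hu hv pu pv =>
    rw [lin2, lin3, lin3, pu, pv, one_mul, mul_one]
    exact T g u v
  | inv u hu pu => rw [lin2inv, lin3inv, inv_inv, pu]
end

section
/- Let G be a compact Hausdorff group, K an open abelian subgroup, α an automorphism of G, and X = {x ∈ G : α(x) = x⁻¹} a closed set. If t ∈ X is such that A := {a ∈ K : ta ∈ X} has positive Haar measure, then A is an open subgroup of G. -/
open MeasureTheory Pointwise

theorem stmt_18 {G : Type*} [Group G] [TopologicalSpace G] [IsTopologicalGroup G]
    [CompactSpace G] [T2Space G] [MeasurableSpace G] [BorelSpace G]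
    (μ : Measure G) [μ.IsHaarMeasure] [IsProbabilityMeasure μ]
    (K : Subgroup G) (hKopen : IsOpen (K : Set G))
    (hKab : ∀ a ∈ K, ∀ b ∈ K, a * b = b * a)
    (α : G ≃* G) (hX : IsClosed {x : G | α x = x⁻¹})
    (t : G) (ht : α t = t⁻¹)
    (hpos : 0 < μ {a : G | a ∈ K ∧ α (t * a) = (t * a)⁻¹}) :
    ∃ H : Subgroup G, (H : Set G) = {a : G | a ∈ K ∧ α (t * a) = (t * a)⁻¹} ∧
      IsOpen (H : Set G) := by
  set S : Set G := {a : G | a ∈ K ∧ α (t * a) = (t * a)⁻¹} with hS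
  have hαb : ∀ a : G, a ∈ S → α a = t * (t * a)⁻¹ := by
    intro a ⟨_, ha⟩
    have : α (t * a) = α t * α a := map_mul α t a
    rw [ha, ht] at this
    rw [this]
    group
  have hmulmem : ∀ {a b : G}, a ∈ S → b ∈ S → a * b ∈ S := by
    rintro a b ⟨haK, ha⟩ ⟨hbK, hb⟩
    refine ⟨K.mul_mem haK hbK, ?_⟩
    have hcomm : a * b = b * a := hKab a haK b hbK
    have h1 : α (t * (a * b)) = α (t * a) * α b := by
      rw [← map_mul, mul_assoc]
    rw [h1, ha, hαb b ⟨hbK, hb⟩]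
    rw [show t * (a * b) = t * (b * a) by rw [hcomm]]
    group
  have hinvmem : ∀ {a : G}, a ∈ S → a⁻¹ ∈ S := by
    rintro a ⟨haK, ha⟩
    refine ⟨K.inv_mem haK, ?_⟩
    have h1 : t * a⁻¹ = t * (t * a)⁻¹ * t := by group
    rw [h1, map_mul, map_mul, map_inv, ha, ht]
    group
  refine ⟨{ carrier := S
            one_mem' := ⟨K.one_mem, by simpa using ht⟩
            mul_mem' := hmulmem
            inv_mem' := hinvmem }, rfl, ?_⟩
  · -- openness
    have hSclosed : IsClosed S := by
      have h1 : IsClosed (K : Set G) := K.isClosed_of_isOpen hKopen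
      have h2 : IsClosed ((fun a => t * a) ⁻¹' {x : G | α x = x⁻¹}) :=
        hX.preimage (continuous_const.mul continuous_id)
      exact h1.inter h2
    have hmeas : MeasurableSet S := hSclosed.measurableSet
    have hdiv : S / S ∈ nhds (1 : G) :=
      Measure.div_mem_nhds_one_of_haar_pos μ S hmeas hpos
    apply Subgroup.isOpen_of_mem_nhds
    refine Filter.mem_of_superset hdiv ?_
    rintro x ⟨u, hu, v, hv, rfl⟩
    have : u * v⁻¹ ∈ S := hmulmem hu (hinvmem hv)
    simpa [div_eq_mul_inv] using this
end
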